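/- arXiv:1108.1972 — 4 statements merged into one kernel-verified Lean document; each statement's English description precedes it below -/
import Mathlib

section
/- Let X = (X₁,…,X_d) be a random vector whose joint distribution function F is a MEV distribution with unit Fréchet marginals, and let I₁, I₂ be disjoint non-empty subsets of {1,…,d}. Then for all x, y > 0 the limit Λ_U^{(I₁|I₂)}(x,y) = lim_{t→∞} P( M(I₁) > 1 − x/t | M(I₂) > 1 − y/t ) exists and equals 1 + (x ε_{I₁})/(y ε_{I₂}) − l^{(I₁,I₂)}(x^{-1}, y^{-1})/(y ε_{I₂}). -/
open MeasureTheory Filter Finset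

set_option linter.unusedSectionVars false

/-- The joint distribution function of the random vector `X` under `μ`. -/
noncomputable def jointCDF {Ω : Type*} [MeasurableSpace Ω] (μ : Measure Ω) {d : ℕ}
    (X : Fin d → Ω → ℝ) (x : Fin d → ℝ) : ℝ :=
  (μ {ω | ∀ i, X i ω ≤ x i}).toReal

/-- The marginal distribution function of the `i`-th coordinate of `X` under `μ`. -/
noncomputable def margCDF {Ω : Type*} [MeasurableSpace Ω] (μ : Measure Ω) {d : ℕ}
    (X : Fin d → Ω → ℝ) (i : Fin d) (u : ℝ) : ℝ :=
  (μ {ω | X i ω ≤ u}).toReal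

/-- `l^{(I₁,I₂)}(x,y) = -log F(a₁,…,a_d)` where `aᵢ = x` on `I₁`, `aᵢ = y` on `I₂` and
`aᵢ = ∞` otherwise (taking the limit of `F` in those arguments, i.e. dropping the
corresponding constraints). -/
noncomputable def mevL {Ω : Type*} [MeasurableSpace Ω] (μ : Measure Ω) {d : ℕ}
    (X : Fin d → Ω → ℝ) (I₁ I₂ : Finset (Fin d)) (x y : ℝ) : ℝ :=
  -Real.log (μ {ω | (∀ i ∈ I₁, X i ω ≤ x) ∧ (∀ j ∈ I₂, X j ω ≤ y)}).toReal

/-- The extremal coefficient `ε_I = l^{(I,∅)}(1,1)` of the sub-vector `X_I`. -/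
noncomputable def extCoef {Ω : Type*} [MeasurableSpace Ω] (μ : Measure Ω) {d : ℕ}
    (X : Fin d → Ω → ℝ) (I : Finset (Fin d)) : ℝ :=
  mevL μ X I ∅ 1 1

/-- `M(I) = max_{i ∈ I} F_i(X_i)`. -/
noncomputable def Msub {Ω : Type*} [MeasurableSpace Ω] (μ : Measure Ω) {d : ℕ}
    (X : Fin d → Ω → ℝ) (I : Finset (Fin d)) (hI : I.Nonempty) (ω : Ω) : ℝ :=
  I.sup' hI fun i => margCDF μ X i (X i ω)

/-- The stable tail dependence function `l(x₁,…,x_d) = -log F(x₁,…,x_d)`. -/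
noncomputable def stdf {Ω : Type*} [MeasurableSpace Ω] (μ : Measure Ω) {d : ℕ}
    (X : Fin d → Ω → ℝ) (x : Fin d → ℝ) : ℝ :=
  -Real.log (jointCDF μ X x)

/-- `X` has a multivariate extreme value (max-stable) distribution with unit Fréchet
marginals under the probability measure `μ`. -/
structure IsMEVFrechet {Ω : Type*} [MeasurableSpace Ω] (μ : Measure Ω) {d : ℕ}
    (X : Fin d → Ω → ℝ) : Prop where
  meas : ∀ i, Measurable (X i)
  frechet : ∀ i, ∀ u : ℝ, 0 < u → margCDF μ X i u = Real.exp (-u⁻¹)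
  maxStable : ∀ t : ℝ, 0 < t → ∀ x : Fin d → ℝ, (∀ i, 0 < x i) →
    jointCDF μ X (fun i => t * x i) ^ t = jointCDF μ X x


section Aux

variable {Ω : Type*} [MeasurableSpace Ω] (μ : Measure Ω) {d : ℕ} (X : Fin d → Ω → ℝ)

/-- Set underlying `mevL`. -/
def gset (J₁ J₂ : Finset (Fin d)) (a b : ℝ) : Set Ω :=
  {ω | (∀ i ∈ J₁, X i ω ≤ a) ∧ (∀ j ∈ J₂, X j ω ≤ b)}

/-- Real number `g` value. -/
noncomputable def gval (J₁ J₂ : Finset (Fin d)) (a b : ℝ) : ℝ :=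
  (μ (gset X J₁ J₂ a b)).toReal

lemma mevL_eq_gval (J₁ J₂ : Finset (Fin d)) (a b : ℝ) :
    mevL μ X J₁ J₂ a b = -Real.log (gval μ X J₁ J₂ a b) := rfl

lemma meas_gset (hm : ∀ i, Measurable (X i)) (J₁ J₂ : Finset (Fin d)) (a b : ℝ) :
    MeasurableSet (gset X J₁ J₂ a b) := by
  have h1 : gset X J₁ J₂ a b =
      (⋂ i ∈ (J₁ : Set (Fin d)), X i ⁻¹' Set.Iic a) ∩ ⋂ j ∈ (J₂ : Set (Fin d)), X j ⁻¹' Set.Iic b := by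
    ext ω; simp [gset, Set.mem_iInter]
  rw [h1]
  exact (MeasurableSet.biInter (J₁ : Set (Fin d)).to_countable
      (fun i _ => (hm i) measurableSet_Iic)).inter
    (MeasurableSet.biInter (J₂ : Set (Fin d)).to_countable
      (fun i _ => (hm i) measurableSet_Iic))

set_option linter.unusedSectionVars false in
lemma gset_mono (J₁ J₂ : Finset (Fin d)) {a b a' b' : ℝ} (ha : a ≤ a') (hb : b ≤ b') :
    gset X J₁ J₂ a b ⊆ gset X J₁ J₂ a' b' := by
  rintro ω ⟨h1, h2⟩
  exact ⟨fun i hi => (h1 i hi).trans ha, fun j hj => (h2 j hj).trans hb⟩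

end Aux

section Calculus

lemma tendsto_mul_neg_log_one_sub_div (x : ℝ) :
    Tendsto (fun t : ℝ => t * (-Real.log (1 - x / t))) atTop (nhds x) := by
  have hg : HasDerivAt (fun s : ℝ => 1 - x * s) (-x) 0 := by
    simpa using ((hasDerivAt_id (0 : ℝ)).const_mul x).const_sub 1
  have hne : (1 : ℝ) - x * 0 ≠ 0 := by norm_num
  have hlog : HasDerivAt (fun s : ℝ => Real.log (1 - x * s)) (-x) 0 := by
    simpa using hg.log hne
  have hf : HasDerivAt (fun s : ℝ => -Real.log (1 - x * s)) x 0 := by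
    have := hlog.neg; rw [neg_neg] at this; exact this
  have hslope := hasDerivAt_iff_tendsto_slope.mp hf
  have hinv : Tendsto (fun t : ℝ => t⁻¹) atTop (nhdsWithin 0 {(0 : ℝ)}ᶜ) := by
    refine tendsto_nhdsWithin_of_tendsto_nhds_of_eventually_within _ tendsto_inv_atTop_zero ?_
    filter_upwards [eventually_gt_atTop (0 : ℝ)] with t ht
    exact (inv_pos.mpr ht).ne'
  have hcomp := hslope.comp hinv
  refine hcomp.congr' ?_
  filter_upwards [eventually_gt_atTop (0 : ℝ)] with t ht
  have ht0 : t ≠ 0 := ht.ne'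
  simp only [Function.comp_apply, slope_def_field]
  rw [div_eq_mul_inv x t]
  field_simp
  simp only [mul_zero, sub_zero, Real.log_one]
  ring

lemma tendsto_mul_one_sub_exp_neg {w : ℝ → ℝ} {c : ℝ} (hw : ∀ᶠ t in atTop, 0 < w t)
    (h : Tendsto (fun t => t * w t) atTop (nhds c)) :
    Tendsto (fun t => t * (1 - Real.exp (-w t))) atTop (nhds c) := by
  have hf : HasDerivAt (fun s : ℝ => 1 - Real.exp (-s)) 1 0 := by
    have h1 : HasDerivAt (fun s : ℝ => -s) (-1) 0 := by exact (hasDerivAt_id (0:ℝ)).neg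
    simpa using (h1.exp.const_sub 1)
  have hslope := hasDerivAt_iff_tendsto_slope.mp hf
  have hw0 : Tendsto w atTop (nhds 0) := by
    have h1 : Tendsto (fun t => (t * w t) * t⁻¹) atTop (nhds (c * 0)) :=
      h.mul tendsto_inv_atTop_zero
    rw [mul_zero] at h1
    refine h1.congr' ?_
    filter_upwards [eventually_gt_atTop (0 : ℝ)] with t ht
    field_simp
  have hwin : Tendsto w atTop (nhdsWithin 0 {(0 : ℝ)}ᶜ) := by
    refine tendsto_nhdsWithin_of_tendsto_nhds_of_eventually_within _ hw0 ?_
    filter_upwards [hw] with t ht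
    exact ht.ne'
  have hcomp := hslope.comp hwin
  have hmul := h.mul hcomp
  rw [mul_one] at hmul
  refine hmul.congr' ?_
  filter_upwards [hw] with t ht
  simp only [Function.comp_apply, slope_def_field]
  field_simp
  have hwt : w t ≠ 0 := ht.ne'
  simp only [neg_zero, Real.exp_zero, sub_self, sub_zero]
  field_simp

end Calculus

section Main

variable {Ω : Type*} [MeasurableSpace Ω] (μ : Measure Ω) [IsProbabilityMeasure μ]
  {d : ℕ} (X : Fin d → Ω → ℝ)

set_option linter.unusedSectionVars false in
lemma gval_nonneg (J₁ J₂ : Finset (Fin d)) (a b : ℝ) : 0 ≤ gval μ X J₁ J₂ a b :=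
  ENNReal.toReal_nonneg

lemma gval_le_one (J₁ J₂ : Finset (Fin d)) (a b : ℝ) : gval μ X J₁ J₂ a b ≤ 1 := by
  unfold gval
  simpa using ENNReal.toReal_mono (by simp : (1 : ENNReal) ≠ ⊤)
    (prob_le_one (μ := μ) (s := gset X J₁ J₂ a b))

lemma gval_mono (J₁ J₂ : Finset (Fin d)) {a b a' b' : ℝ} (ha : a ≤ a') (hb : b ≤ b') :
    gval μ X J₁ J₂ a b ≤ gval μ X J₁ J₂ a' b' :=
  ENNReal.toReal_mono (measure_ne_top μ _) (measure_mono (gset_mono X J₁ J₂ ha hb))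

/-- Homogeneity of `gval` inherited from max-stability. -/
lemma gval_homog (hX : IsMEVFrechet μ X) (J₁ J₂ : Finset (Fin d)) (hd : Disjoint J₁ J₂)
    {a b t : ℝ} (ha : 0 < a) (hb : 0 < b)
    (ht : 0 < t) : gval μ X J₁ J₂ (t * a) (t * b) ^ t = gval μ X J₁ J₂ a b := by
  classical
  set xn : ℕ → Fin d → ℝ := fun n i => if i ∈ J₁ then a else if i ∈ J₂ then b else (n + 1 : ℝ)
    with hxn
  have hxpos : ∀ n i, 0 < xn n i := by
    intro n i
    simp only [hxn]
    split_ifs with h1 h2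
    · exact ha
    · exact hb
    · positivity
  have hmono : ∀ (c : ℝ), 0 < c → Monotone (fun n => {ω | ∀ i, X i ω ≤ c * xn n i}) := by
    intro c hc n m hnm ω hω i
    have h0 := hω i
    simp only [hxn] at h0 ⊢
    split_ifs with h1 h2
    · simpa [h1] using h0
    · simpa [h1, h2] using h0
    · simp only [h1, h2, if_neg, if_false] at h0
      refine h0.trans ?_
      have h3 : (n : ℝ) + 1 ≤ (m : ℝ) + 1 := by exact_mod_cast by omega
      nlinarith
  have hunion : ∀ (c : ℝ), 0 < c →
      (⋃ n, {ω | ∀ i, X i ω ≤ c * xn n i}) = gset X J₁ J₂ (c * a) (c * b) := by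
    intro c hc
    ext ω
    simp only [Set.mem_iUnion, Set.mem_setOf_eq, gset]
    constructor
    · rintro ⟨n, hn⟩
      refine ⟨fun i hi => by simpa [hxn, hi] using hn i, fun j hj => ?_⟩
      have hj1 : j ∉ J₁ := fun h => (Finset.disjoint_left.mp hd h) hj
      simpa [hxn, hj1, hj] using hn j
    · rintro ⟨hA, hB⟩
      refine ⟨(Finset.univ : Finset (Fin d)).sup fun i => ⌈X i ω / c⌉₊, fun i => ?_⟩
      simp only [hxn]
      split_ifs with h1 h2
      · exact hA i h1
      · exact hB i h2
      · have h3 : X i ω / c ≤ ⌈X i ω / c⌉₊ := Nat.le_ceil _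
        have h4 : ((⌈X i ω / c⌉₊ : ℕ) : ℝ) ≤ ((Finset.univ.sup fun i => ⌈X i ω / c⌉₊ : ℕ) : ℝ) :=
          Nat.cast_le.mpr (Finset.le_sup (f := fun i => ⌈X i ω / c⌉₊) (Finset.mem_univ i))
        have h5 : X i ω / c ≤ ((Finset.univ.sup fun i => ⌈X i ω / c⌉₊ : ℕ) : ℝ) + 1 := by linarith
        calc X i ω = (X i ω / c) * c := by field_simp
        _ ≤ (((Finset.univ.sup fun i => ⌈X i ω / c⌉₊ : ℕ) : ℝ) + 1) * c :=
            mul_le_mul_of_nonneg_right h5 hc.le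
        _ = c * (((Finset.univ.sup fun i => ⌈X i ω / c⌉₊ : ℕ) : ℝ) + 1) := by ring
  have hconv : ∀ (c : ℝ), 0 < c →
      Tendsto (fun n => jointCDF μ X (fun i => c * xn n i)) atTop
        (nhds (gval μ X J₁ J₂ (c * a) (c * b))) := by
    intro c hc
    have h1 := tendsto_measure_iUnion_atTop (μ := μ) (hmono c hc)
    rw [hunion c hc] at h1
    exact (ENNReal.tendsto_toReal (measure_ne_top μ _)).comp h1
  have hconv1 : Tendsto (fun n => jointCDF μ X (fun i => xn n i)) atTop
      (nhds (gval μ X J₁ J₂ a b)) := by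
    have h := hconv 1 one_pos
    simpa using h
  have hconvt : Tendsto (fun n => jointCDF μ X (fun i => t * xn n i) ^ t) atTop
      (nhds (gval μ X J₁ J₂ (t * a) (t * b) ^ t)) := by
    have hcont : ContinuousAt (fun z : ℝ => z ^ t) (gval μ X J₁ J₂ (t * a) (t * b)) :=
      Real.continuousAt_rpow_const _ _ (Or.inr ht.le)
    exact hcont.tendsto.comp (hconv t ht)
  have heq : (fun n => jointCDF μ X (fun i => t * xn n i) ^ t)
      = fun n => jointCDF μ X (fun i => xn n i) := by
    funext n
    exact hX.maxStable t ht (xn n) (hxpos n)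
  rw [heq] at hconvt
  exact tendsto_nhds_unique hconvt hconv1

lemma gset_empty_right (J : Finset (Fin d)) (a b b' : ℝ) :
    gset X J (∅ : Finset (Fin d)) a b = gset X J ∅ a b' := by
  ext ω; simp [gset]

lemma gval_tendsto_one (J₁ J₂ : Finset (Fin d)) :
    Tendsto (fun n : ℕ => gval μ X J₁ J₂ (n + 1) (n + 1)) atTop (nhds 1) := by
  have hmono : Monotone (fun n : ℕ => gset X J₁ J₂ (n + 1 : ℝ) (n + 1 : ℝ)) := by
    intro n m hnm
    have h : ((n : ℝ) + 1) ≤ (m : ℝ) + 1 := by exact_mod_cast by omega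
    exact gset_mono X J₁ J₂ h h
  have hunion : (⋃ n : ℕ, gset X J₁ J₂ (n + 1 : ℝ) (n + 1 : ℝ)) = Set.univ := by
    ext ω
    simp only [Set.mem_iUnion, Set.mem_univ, iff_true, gset, Set.mem_setOf_eq]
    classical
    refine ⟨(Finset.univ : Finset (Fin d)).sup fun i => ⌈X i ω⌉₊, ?_, ?_⟩ <;>
    · intro i _
      have h3 : X i ω ≤ ⌈X i ω⌉₊ := Nat.le_ceil _
      have h4 : ((⌈X i ω⌉₊ : ℕ) : ℝ) ≤ ((Finset.univ.sup fun i => ⌈X i ω⌉₊ : ℕ) : ℝ) :=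
        Nat.cast_le.mpr (Finset.le_sup (f := fun i => ⌈X i ω⌉₊) (Finset.mem_univ i))
      linarith
  have h1 := tendsto_measure_iUnion_atTop (μ := μ)
    (s := fun n : ℕ => gset X J₁ J₂ (n + 1 : ℝ) (n + 1 : ℝ)) hmono
  rw [hunion] at h1
  have h2 := (ENNReal.tendsto_toReal (measure_ne_top μ _)).comp h1
  simpa [gval, Function.comp_def] using h2

lemma gval_pos (hX : IsMEVFrechet μ X) (J₁ J₂ : Finset (Fin d)) (hd : Disjoint J₁ J₂)
    {a b : ℝ} (ha : 0 < a) (hb : 0 < b) : 0 < gval μ X J₁ J₂ a b := by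
  have h11 : 0 < gval μ X J₁ J₂ 1 1 := by
    rcases lt_or_eq_of_le (gval_nonneg μ X J₁ J₂ 1 1) with h | h
    · exact h
    · exfalso
      have hzero : ∀ n : ℕ, gval μ X J₁ J₂ (n + 1) (n + 1) = 0 := by
        intro n
        have hpos : (0 : ℝ) < (n : ℝ) + 1 := by positivity
        have hh := gval_homog μ X hX J₁ J₂ hd one_pos one_pos hpos
        simp only [mul_one] at hh
        rw [← h] at hh
        by_contra hne
        have hgpos : 0 < gval μ X J₁ J₂ (n + 1) (n + 1) :=
          lt_of_le_of_ne (gval_nonneg μ X J₁ J₂ _ _) (Ne.symm hne)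
        have := Real.rpow_pos_of_pos hgpos ((n : ℝ) + 1)
        rw [hh] at this
        exact lt_irrefl 0 this
      have h1 := gval_tendsto_one μ X J₁ J₂
      simp only [hzero] at h1
      exact zero_ne_one (tendsto_nhds_unique tendsto_const_nhds h1)
  set m := min a b with hm
  have hmpos : 0 < m := lt_min ha hb
  have hmm : 0 < gval μ X J₁ J₂ m m := by
    have hh := gval_homog μ X hX J₁ J₂ hd one_pos one_pos hmpos
    simp only [mul_one] at hh
    by_contra hne
    push_neg at hne
    have h0 : gval μ X J₁ J₂ m m = 0 := le_antisymm hne (gval_nonneg μ X J₁ J₂ _ _)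
    rw [h0, Real.zero_rpow hmpos.ne'] at hh
    exact h11.ne hh
  exact lt_of_lt_of_le hmm (gval_mono μ X J₁ J₂ (min_le_left a b) (min_le_right a b))

lemma exp_neg_mevL (hX : IsMEVFrechet μ X) (J₁ J₂ : Finset (Fin d)) (hd : Disjoint J₁ J₂)
    {a b : ℝ} (ha : 0 < a) (hb : 0 < b) :
    Real.exp (-(mevL μ X J₁ J₂ a b)) = gval μ X J₁ J₂ a b := by
  rw [mevL_eq_gval, neg_neg, Real.exp_log (gval_pos μ X hX J₁ J₂ hd ha hb)]

lemma mevL_homog (hX : IsMEVFrechet μ X) (J₁ J₂ : Finset (Fin d)) (hd : Disjoint J₁ J₂)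
    {a b t : ℝ} (ha : 0 < a) (hb : 0 < b) (ht : 0 < t) :
    mevL μ X J₁ J₂ (t * a) (t * b) = mevL μ X J₁ J₂ a b / t := by
  have hh := gval_homog μ X hX J₁ J₂ hd ha hb ht
  have hl := congrArg Real.log hh
  rw [Real.log_rpow (gval_pos μ X hX J₁ J₂ hd (mul_pos ht ha) (mul_pos ht hb))] at hl
  rw [mevL_eq_gval, mevL_eq_gval, ← hl]
  field_simp

lemma mevL_inv_homog (hX : IsMEVFrechet μ X) (J₁ J₂ : Finset (Fin d)) (hd : Disjoint J₁ J₂)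
    {α β t : ℝ} (hα : 0 < α) (hβ : 0 < β) (ht : 0 < t) :
    mevL μ X J₁ J₂ (t * α)⁻¹ (t * β)⁻¹ = t * mevL μ X J₁ J₂ α⁻¹ β⁻¹ := by
  have h := mevL_homog μ X hX J₁ J₂ hd (inv_pos.mpr hα) (inv_pos.mpr hβ)
    (inv_pos.mpr ht)
  rw [mul_inv, mul_inv, h]
  field_simp

lemma mevL_inv_mono (hX : IsMEVFrechet μ X) (J₁ J₂ : Finset (Fin d)) (hd : Disjoint J₁ J₂)
    {α β α' β' : ℝ} (hα : 0 < α) (hβ : 0 < β) (hα' : α ≤ α') (hβ' : β ≤ β') :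
    mevL μ X J₁ J₂ α⁻¹ β⁻¹ ≤ mevL μ X J₁ J₂ α'⁻¹ β'⁻¹ := by
  have h1 : α'⁻¹ ≤ α⁻¹ := by
    apply inv_anti₀ hα hα'
  have h2 : β'⁻¹ ≤ β⁻¹ := by
    apply inv_anti₀ hβ hβ'
  have hg := gval_mono μ X J₁ J₂ h1 h2
  rw [mevL_eq_gval, mevL_eq_gval]
  have hpos := gval_pos μ X hX J₁ J₂ hd (inv_pos.mpr (hα.trans_le hα'))
    (inv_pos.mpr (hβ.trans_le hβ'))
  have := Real.log_le_log hpos hg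
  linarith

lemma gval_marg (hX : IsMEVFrechet μ X) (J : Finset (Fin d)) {β : ℝ} (hβ : 0 < β) :
    gval μ X J (∅ : Finset (Fin d)) β⁻¹ β⁻¹ = Real.exp (-(β * extCoef μ X J)) := by
  have hd : Disjoint J (∅ : Finset (Fin d)) := Finset.disjoint_empty_right J
  have h1 := mevL_inv_homog μ X hX J ∅ hd one_pos one_pos hβ
  simp only [mul_one, inv_one] at h1
  have h2 := exp_neg_mevL μ X hX J ∅ hd (inv_pos.mpr hβ) (inv_pos.mpr hβ)
  rw [← h2, h1]
  rfl

lemma extCoef_pos (hX : IsMEVFrechet μ X) (I : Finset (Fin d)) (hI : I.Nonempty) :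
    0 < extCoef μ X I := by
  obtain ⟨i₀, hi₀⟩ := hI
  have hsub : gset X I (∅ : Finset (Fin d)) (1 : ℝ) 1 ⊆ {ω | X i₀ ω ≤ 1} :=
    fun ω hω => hω.1 i₀ hi₀
  have hle : gval μ X I ∅ 1 1 ≤ margCDF μ X i₀ 1 :=
    ENNReal.toReal_mono (measure_ne_top μ _) (measure_mono hsub)
  rw [hX.frechet i₀ 1 one_pos] at hle
  have hpos := gval_pos μ X hX I ∅ (Finset.disjoint_empty_right I) one_pos one_pos
  have hlog := Real.log_le_log hpos hle
  rw [Real.log_exp] at hlog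
  show 0 < -Real.log (gval μ X I ∅ 1 1)
  norm_num at hlog ⊢
  linarith

lemma X_le_zero_null (hX : IsMEVFrechet μ X) (i : Fin d) : μ {ω | X i ω ≤ 0} = 0 := by
  have hle : ∀ n : ℕ, (μ {ω | X i ω ≤ 0}).toReal ≤ Real.exp (-((n : ℝ) + 1)) := by
    intro n
    have hsub : {ω | X i ω ≤ 0} ⊆ {ω | X i ω ≤ ((n : ℝ) + 1)⁻¹} := by
      intro ω hω
      have h0 : (0 : ℝ) ≤ ((n : ℝ) + 1)⁻¹ := by positivity
      exact le_trans hω h0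
    have h1 : (μ {ω | X i ω ≤ 0}).toReal ≤ margCDF μ X i ((n : ℝ) + 1)⁻¹ :=
      ENNReal.toReal_mono (measure_ne_top μ _) (measure_mono hsub)
    rw [hX.frechet i _ (by positivity)] at h1
    simpa using h1
  have htends : Tendsto (fun n : ℕ => Real.exp (-((n : ℝ) + 1))) atTop (nhds 0) := by
    apply Real.tendsto_exp_atBot.comp
    exact tendsto_neg_atTop_atBot.comp
      (tendsto_atTop_add_const_right atTop 1 tendsto_natCast_atTop_atTop)
  have h0 : (μ {ω | X i ω ≤ 0}).toReal ≤ 0 := ge_of_tendsto htends (Eventually.of_forall hle)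
  have := ENNReal.toReal_nonneg (a := μ {ω | X i ω ≤ 0})
  have heq : (μ {ω | X i ω ≤ 0}).toReal = 0 := le_antisymm h0 this
  exact (ENNReal.toReal_eq_zero_iff _).mp heq |>.resolve_right (measure_ne_top μ _)

lemma mevL_nonneg (J₁ J₂ : Finset (Fin d)) (a b : ℝ) : 0 ≤ mevL μ X J₁ J₂ a b := by
  rw [mevL_eq_gval]
  have h1 := gval_le_one μ X J₁ J₂ a b
  have h2 := gval_nonneg μ X J₁ J₂ a b
  have := Real.log_nonpos h2 h1
  linarith

lemma mevL_tendsto (hX : IsMEVFrechet μ X) (J₁ J₂ : Finset (Fin d)) (hd : Disjoint J₁ J₂)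
    {x y : ℝ} (hx : 0 < x) (hy : 0 < y) {u v : ℝ → ℝ}
    (hu : Tendsto u atTop (nhds x)) (hv : Tendsto v atTop (nhds y)) :
    Tendsto (fun t => mevL μ X J₁ J₂ (u t)⁻¹ (v t)⁻¹) atTop
      (nhds (mevL μ X J₁ J₂ x⁻¹ y⁻¹)) := by
  set H := mevL μ X J₁ J₂ x⁻¹ y⁻¹ with hH
  have hH0 : 0 ≤ H := mevL_nonneg μ X J₁ J₂ _ _
  rw [tendsto_order]
  constructor
  · intro c hc
    rcases lt_or_ge c 0 with hc0 | hc0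
    · filter_upwards with t
      exact lt_of_lt_of_le hc0 (mevL_nonneg μ X J₁ J₂ _ _)
    · have hHpos : 0 < H := lt_of_le_of_lt hc0 hc
      set sc := (c / H + 1) / 2 with hsc
      have hs0 : 0 < sc := by
        have : 0 ≤ c / H := div_nonneg hc0 hHpos.le
        positivity
      have hs1 : sc < 1 := by
        have : c / H < 1 := (div_lt_one hHpos).mpr hc
        simp only [hsc]
        linarith
      have hsH : c < sc * H := by
        have h1 : sc * H = (c + H) / 2 := by
          field_simp [hsc]
          rw [hsc]; field_simp
        rw [h1]
        linarith
      filter_upwards [hu.eventually (eventually_gt_nhds (by nlinarith : sc * x < x)),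
        hv.eventually (eventually_gt_nhds (by nlinarith : sc * y < y))] with t hut hvt
      have hmono := mevL_inv_mono μ X hX J₁ J₂ hd (mul_pos hs0 hx) (mul_pos hs0 hy)
        hut.le hvt.le
      have hhom := mevL_inv_homog μ X hX J₁ J₂ hd hx hy hs0
      rw [hhom] at hmono
      exact lt_of_lt_of_le hsH (by rwa [← hH] at hmono)
  · intro c hc
    have hc0 : 0 < c := lt_of_le_of_lt hH0 hc
    obtain ⟨sc, hs1, hsH⟩ : ∃ sc : ℝ, 1 < sc ∧ sc * H < c := by
      rcases eq_or_lt_of_le hH0 with h | h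
      · exact ⟨2, one_lt_two, by rw [← h]; simpa using hc0⟩
      · refine ⟨(c / H + 1) / 2, by
          have : 1 < c / H := (one_lt_div h).mpr hc
          linarith, ?_⟩
        have h1 : (c / H + 1) / 2 * H = (c + H) / 2 := by
          field_simp
        rw [h1]
        linarith
    have hs0 : 0 < sc := lt_trans one_pos hs1
    filter_upwards [hu.eventually (eventually_lt_nhds (by nlinarith : x < sc * x)),
      hv.eventually (eventually_lt_nhds (by nlinarith : y < sc * y)),
      hu.eventually (eventually_gt_nhds (half_lt_self hx)),
      hv.eventually (eventually_gt_nhds (half_lt_self hy))] with t hut hvt hut0 hvt0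
    have hupos : 0 < u t := lt_trans (half_pos hx) hut0
    have hvpos : 0 < v t := lt_trans (half_pos hy) hvt0
    have hmono := mevL_inv_mono μ X hX J₁ J₂ hd hupos hvpos hut.le hvt.le
    have hhom := mevL_inv_homog μ X hX J₁ J₂ hd hx hy hs0
    rw [hhom] at hmono
    exact lt_of_le_of_lt (by rwa [← hH] at hmono) hsH

lemma mevL_pos (hX : IsMEVFrechet μ X) (J₁ J₂ : Finset (Fin d)) (hd : Disjoint J₁ J₂)
    (hJ₂ : J₂.Nonempty) {a b : ℝ} (ha : 0 < a) (hb : 0 < b) : 0 < mevL μ X J₁ J₂ a b := by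
  obtain ⟨j₀, hj₀⟩ := hJ₂
  have hsub : gset X J₁ J₂ a b ⊆ {ω | X j₀ ω ≤ b} := fun ω hω => hω.2 j₀ hj₀
  have hle : gval μ X J₁ J₂ a b ≤ margCDF μ X j₀ b :=
    ENNReal.toReal_mono (measure_ne_top μ _) (measure_mono hsub)
  rw [hX.frechet j₀ b hb] at hle
  rw [mevL_eq_gval]
  have h := gval_pos μ X hX J₁ J₂ hd ha hb
  have hlog := Real.log_le_log h hle
  rw [Real.log_exp] at hlog
  have : (0 : ℝ) < b⁻¹ := inv_pos.mpr hb
  linarith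

lemma Msub_le_ae (hX : IsMEVFrechet μ X) (I : Finset (Fin d)) (hI : I.Nonempty)
    {u : ℝ} (hu0 : 0 < u) (hu1 : u < 1) :
    ∀ᵐ ω ∂μ, (Msub μ X I hI ω ≤ u ↔ ∀ i ∈ I, X i ω ≤ (-Real.log u)⁻¹) := by
  have hN : μ (⋃ i, {ω | X i ω ≤ 0}) = 0 := measure_iUnion_null (X_le_zero_null μ X hX)
  have hae : ∀ᵐ ω ∂μ, ω ∉ ⋃ i, {ω | X i ω ≤ 0} := measure_eq_zero_iff_ae_notMem.mp hN
  filter_upwards [hae] with ω hω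
  have hpos : ∀ i, 0 < X i ω := by
    intro i
    by_contra h
    push_neg at h
    exact hω (Set.mem_iUnion.mpr ⟨i, h⟩)
  have hw : 0 < -Real.log u := by
    have := Real.log_neg hu0 hu1
    linarith
  unfold Msub
  rw [Finset.sup'_le_iff]
  apply forall_congr'
  intro i
  apply imp_congr_right
  intro hi
  rw [hX.frechet i (X i ω) (hpos i)]
  constructor
  · intro h
    have h1 : -(X i ω)⁻¹ ≤ Real.log u :=
      Real.exp_le_exp.mp (h.trans_eq (Real.exp_log hu0).symm)
    have h2 : -Real.log u ≤ (X i ω)⁻¹ := by linarith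
    exact (le_inv_comm₀ (hpos i) hw).mpr h2
  · intro h
    have h2 := (le_inv_comm₀ (hpos i) hw).mp h
    have h1 : -(X i ω)⁻¹ ≤ Real.log u := by linarith
    calc Real.exp (-(X i ω)⁻¹) ≤ Real.exp (Real.log u) := Real.exp_le_exp.mpr h1
    _ = u := Real.exp_log hu0

end Main

/-- For a MEV distribution with unit Fréchet marginals and disjoint
non-empty `I₁, I₂`, the limit defining `Λ_U^{(I₁|I₂)}(x,y)` exists and equals
`1 + xε_{I₁}/(yε_{I₂}) - l^{(I₁,I₂)}(x⁻¹,y⁻¹)/(yε_{I₂})`. -/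
theorem statement0 {Ω : Type*} [MeasurableSpace Ω] (μ : Measure Ω) [IsProbabilityMeasure μ]
    {d : ℕ} (X : Fin d → Ω → ℝ) (hX : IsMEVFrechet μ X)
    (I₁ I₂ : Finset (Fin d)) (h1 : I₁.Nonempty) (h2 : I₂.Nonempty) (hdisj : Disjoint I₁ I₂)
    (x y : ℝ) (hx : 0 < x) (hy : 0 < y) :
    Tendsto
      (fun t : ℝ =>
        (μ {ω | 1 - x / t < Msub μ X I₁ h1 ω ∧ 1 - y / t < Msub μ X I₂ h2 ω}).toReal /
          (μ {ω | 1 - y / t < Msub μ X I₂ h2 ω}).toReal)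
      atTop
      (nhds (1 + x * extCoef μ X I₁ / (y * extCoef μ X I₂)
        - mevL μ X I₁ I₂ x⁻¹ y⁻¹ / (y * extCoef μ X I₂))) := by
  classical
  set ε₁ := extCoef μ X I₁ with hε₁def
  set ε₂ := extCoef μ X I₂ with hε₂def
  set H := mevL μ X I₁ I₂ x⁻¹ y⁻¹ with hHdef
  have hε₁ : 0 < ε₁ := extCoef_pos μ X hX I₁ h1
  have hε₂ : 0 < ε₂ := extCoef_pos μ X hX I₂ h2
  set α : ℝ → ℝ := fun t => -Real.log (1 - x / t) with hαdef
  set β : ℝ → ℝ := fun t => -Real.log (1 - y / t) with hβdef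
  have hα : Tendsto (fun t => t * α t) atTop (nhds x) := tendsto_mul_neg_log_one_sub_div x
  have hβ : Tendsto (fun t => t * β t) atTop (nhds y) := tendsto_mul_neg_log_one_sub_div y
  have hev : ∀ᶠ t : ℝ in atTop, 0 < t ∧ x < t ∧ y < t := by
    filter_upwards [eventually_gt_atTop 0, eventually_gt_atTop x, eventually_gt_atTop y]
      with t ha hb hc
    exact ⟨ha, hb, hc⟩
  have hfrac : ∀ t : ℝ, 0 < t → ∀ z : ℝ, 0 < z → z < t →
      0 < 1 - z / t ∧ 1 - z / t < 1 := by
    intro t ht0 z hz hzt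
    constructor
    · rw [sub_pos, div_lt_one ht0]; exact hzt
    · have : 0 < z / t := div_pos hz ht0
      linarith
  have hαpos : ∀ᶠ t in atTop, 0 < α t := by
    filter_upwards [hev] with t ⟨ht0, htx, _⟩
    obtain ⟨hv0, hv1⟩ := hfrac t ht0 x hx htx
    have := Real.log_neg hv0 hv1
    simp only [hαdef]
    linarith
  have hβpos : ∀ᶠ t in atTop, 0 < β t := by
    filter_upwards [hev] with t ⟨ht0, _, hty⟩
    obtain ⟨hv0, hv1⟩ := hfrac t ht0 y hy hty
    have := Real.log_neg hv0 hv1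
    simp only [hβdef]
    linarith
  set w : ℝ → ℝ := fun t => mevL μ X I₁ I₂ (α t)⁻¹ (β t)⁻¹ with hwdef
  -- eventual formulas for denominator and numerator
  have hDen : ∀ᶠ t in atTop,
      (μ {ω | 1 - y / t < Msub μ X I₂ h2 ω}).toReal = 1 - Real.exp (-(β t * ε₂)) := by
    filter_upwards [hev, hβpos] with t ⟨ht0, htx, hty⟩ hbt
    obtain ⟨hv0, hv1⟩ := hfrac t ht0 y hy hty
    have hae := Msub_le_ae μ X hX I₂ h2 hv0 hv1
    have hseteq : {ω | 1 - y / t < Msub μ X I₂ h2 ω}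
        =ᵐ[μ] ((gset X I₂ (∅ : Finset (Fin d)) (β t)⁻¹ (β t)⁻¹)ᶜ : Set Ω) := by
      refine Filter.eventuallyEq_set.mpr ?_
      filter_upwards [hae] with ω hω
      simp only [Set.mem_setOf_eq, Set.mem_compl_iff, gset]
      constructor
      · intro hlt hmem
        exact absurd (hω.mpr fun i hi => hmem.1 i hi) (not_le.mpr hlt)
      · intro hmem
        by_contra hnot
        push_neg at hnot
        exact hmem ⟨hω.mp hnot, by simp⟩
    rw [measure_congr hseteq,
      prob_compl_eq_one_sub (meas_gset X hX.meas I₂ ∅ (β t)⁻¹ (β t)⁻¹),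
      ENNReal.toReal_sub_of_le prob_le_one (by simp), ENNReal.toReal_one]
    have : (μ (gset X I₂ (∅ : Finset (Fin d)) (β t)⁻¹ (β t)⁻¹)).toReal
        = Real.exp (-(β t * ε₂)) := by
      have := gval_marg μ X hX I₂ hbt
      rw [mul_comm (β t) ε₂] at this ⊢
      exact this
    rw [this]
  have hNum : ∀ᶠ t in atTop,
      (μ {ω | 1 - x / t < Msub μ X I₁ h1 ω ∧ 1 - y / t < Msub μ X I₂ h2 ω}).toReal
        = (1 - Real.exp (-(α t * ε₁))) + (1 - Real.exp (-(β t * ε₂)))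
          - (1 - Real.exp (-(w t))) := by
    filter_upwards [hev, hαpos, hβpos] with t ⟨ht0, htx, hty⟩ hat hbt
    obtain ⟨hu0, hu1⟩ := hfrac t ht0 x hx htx
    obtain ⟨hv0, hv1⟩ := hfrac t ht0 y hy hty
    have hae1 := Msub_le_ae μ X hX I₁ h1 hu0 hu1
    have hae2 := Msub_le_ae μ X hX I₂ h2 hv0 hv1
    set C₁ := gset X I₁ (∅ : Finset (Fin d)) (α t)⁻¹ (α t)⁻¹ with hC₁
    set C₂ := gset X I₂ (∅ : Finset (Fin d)) (β t)⁻¹ (β t)⁻¹ with hC₂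
    have hseteq : ({ω | 1 - x / t < Msub μ X I₁ h1 ω ∧ 1 - y / t < Msub μ X I₂ h2 ω} : Set Ω)
        =ᵐ[μ] ((C₁ ∪ C₂)ᶜ : Set Ω) := by
      refine Filter.eventuallyEq_set.mpr ?_
      filter_upwards [hae1, hae2] with ω hω1 hω2
      simp only [Set.mem_setOf_eq, Set.mem_compl_iff, Set.mem_union, hC₁, hC₂, gset, not_or]
      constructor
      · rintro ⟨hlt1, hlt2⟩
        constructor
        · intro hmem
          exact absurd (hω1.mpr fun i hi => hmem.1 i hi) (not_le.mpr hlt1)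
        · intro hmem
          exact absurd (hω2.mpr fun i hi => hmem.1 i hi) (not_le.mpr hlt2)
      · rintro ⟨hm1, hm2⟩
        constructor
        · by_contra hnot
          push_neg at hnot
          exact hm1 ⟨hω1.mp hnot, by simp⟩
        · by_contra hnot
          push_neg at hnot
          exact hm2 ⟨hω2.mp hnot, by simp⟩
    have hm1 : MeasurableSet C₁ := meas_gset X hX.meas I₁ ∅ _ _
    have hm2 : MeasurableSet C₂ := meas_gset X hX.meas I₂ ∅ _ _
    have hinter : C₁ ∩ C₂ = gset X I₁ I₂ (α t)⁻¹ (β t)⁻¹ := by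
      ext ω
      simp only [Set.mem_inter_iff, hC₁, hC₂, gset, Set.mem_setOf_eq]
      constructor
      · rintro ⟨⟨ha, _⟩, ⟨hb, _⟩⟩
        exact ⟨ha, hb⟩
      · rintro ⟨ha, hb⟩
        exact ⟨⟨ha, by simp⟩, ⟨hb, by simp⟩⟩
    have hcompl : (μ ((C₁ ∪ C₂)ᶜ)).toReal = 1 - (μ (C₁ ∪ C₂)).toReal := by
      rw [prob_compl_eq_one_sub (hm1.union hm2),
        ENNReal.toReal_sub_of_le prob_le_one (by simp), ENNReal.toReal_one]
    have hincl : (μ (C₁ ∪ C₂)).toReal + (μ (C₁ ∩ C₂)).toReal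
        = (μ C₁).toReal + (μ C₂).toReal := by
      have h := measure_union_add_inter (μ := μ) C₁ hm2
      have h2 := congrArg ENNReal.toReal h
      rw [ENNReal.toReal_add (measure_ne_top μ _) (measure_ne_top μ _),
        ENNReal.toReal_add (measure_ne_top μ _) (measure_ne_top μ _)] at h2
      exact h2
    have hv1' : (μ C₁).toReal = Real.exp (-(α t * ε₁)) := by
      have := gval_marg μ X hX I₁ hat
      rw [mul_comm (α t) ε₁] at this ⊢
      exact this
    have hv2' : (μ C₂).toReal = Real.exp (-(β t * ε₂)) := by
      have := gval_marg μ X hX I₂ hbt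
      rw [mul_comm (β t) ε₂] at this ⊢
      exact this
    have hv3' : (μ (C₁ ∩ C₂)).toReal = Real.exp (-(w t)) := by
      rw [hinter]
      exact (exp_neg_mevL μ X hX I₁ I₂ hdisj (inv_pos.mpr hat) (inv_pos.mpr hbt)).symm
    rw [measure_congr hseteq, hcompl]
    rw [hv1', hv2', hv3'] at hincl
    linarith
  -- limits
  have hwpos : ∀ᶠ t in atTop, 0 < w t := by
    filter_upwards [hαpos, hβpos] with t hat hbt
    exact mevL_pos μ X hX I₁ I₂ hdisj h2 (inv_pos.mpr hat) (inv_pos.mpr hbt)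
  have hT1 : Tendsto (fun t => t * (α t * ε₁)) atTop (nhds (x * ε₁)) := by
    have := hα.mul_const ε₁
    refine this.congr fun t => by ring
  have hT2 : Tendsto (fun t => t * (β t * ε₂)) atTop (nhds (y * ε₂)) := by
    have := hβ.mul_const ε₂
    refine this.congr fun t => by ring
  have hA : Tendsto (fun t => t * (1 - Real.exp (-(α t * ε₁)))) atTop (nhds (x * ε₁)) := by
    refine tendsto_mul_one_sub_exp_neg ?_ hT1
    filter_upwards [hαpos] with t hat
    exact mul_pos hat hε₁
  have hB : Tendsto (fun t => t * (1 - Real.exp (-(β t * ε₂)))) atTop (nhds (y * ε₂)) := by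
    refine tendsto_mul_one_sub_exp_neg ?_ hT2
    filter_upwards [hβpos] with t hbt
    exact mul_pos hbt hε₂
  have hT3 : Tendsto (fun t => t * w t) atTop (nhds H) := by
    have hm := mevL_tendsto μ X hX I₁ I₂ hdisj hx hy hα hβ
    refine hm.congr' ?_
    filter_upwards [hev, hαpos, hβpos] with t ⟨ht0, _, _⟩ hat hbt
    exact mevL_inv_homog μ X hX I₁ I₂ hdisj hat hbt ht0
  have hC : Tendsto (fun t => t * (1 - Real.exp (-(w t)))) atTop (nhds H) :=
    tendsto_mul_one_sub_exp_neg hwpos hT3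
  have hTNum : Tendsto (fun t => t * ((1 - Real.exp (-(α t * ε₁))) + (1 - Real.exp (-(β t * ε₂)))
      - (1 - Real.exp (-(w t))))) atTop (nhds (x * ε₁ + y * ε₂ - H)) := by
    have := (hA.add hB).sub hC
    refine this.congr fun t => by ring
  have hne : y * ε₂ ≠ 0 := (mul_pos hy hε₂).ne'
  have hdiv := hTNum.div hB hne
  have hfinal : Tendsto
      (fun t : ℝ =>
        (μ {ω | 1 - x / t < Msub μ X I₁ h1 ω ∧ 1 - y / t < Msub μ X I₂ h2 ω}).toReal /
          (μ {ω | 1 - y / t < Msub μ X I₂ h2 ω}).toReal)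
      atTop (nhds ((x * ε₁ + y * ε₂ - H) / (y * ε₂))) := by
    refine hdiv.congr' ?_
    filter_upwards [hNum, hDen, hev] with t hN hD ⟨ht0, _, _⟩
    simp only [Pi.div_apply]
    rw [hN, hD]
    exact mul_div_mul_left _ _ ht0.ne' 
  have hval : (x * ε₁ + y * ε₂ - H) / (y * ε₂) = 1 + x * ε₁ / (y * ε₂) - H / (y * ε₂) := by
    field_simp
    ring
  rwa [hval] at hfinal
end

section
/- Let X = (X₁,…,X_d) be a random vector whose joint distribution function F is a MEV distribution with unit Fréchet marginals, and let I₁, I₂ be disjoint non-empty subsets of {1,…,d}. Then for all x, y > 0, lim_{t→∞} t · P( M(I₁) > 1 − x/t or M(I₂) > 1 − y/t ) = l^{(I₁,I₂)}(x^{-1}, y^{-1}); that is, l^{(I₁,I₂)}(x^{-1},y^{-1}) equals the bivariate stable tail dependence function of the pair (M(I₁), M(I₂)) evaluated at (x,y). -/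
open MeasureTheory Filter Finset

section Auxiliary

open Topology

variable {Ω : Type*} [MeasurableSpace Ω] {μ : Measure Ω} [IsProbabilityMeasure μ]
  {d : ℕ} {X : Fin d → Ω → ℝ}

/-- The partial joint CDF with constraints only on `I₁` (level `a`) and `I₂` (level `b`). -/
noncomputable def Gfun (μ : Measure Ω) (X : Fin d → Ω → ℝ) (I₁ I₂ : Finset (Fin d))
    (a b : ℝ) : ℝ :=
  (μ {ω | (∀ i ∈ I₁, X i ω ≤ a) ∧ (∀ j ∈ I₂, X j ω ≤ b)}).toReal

lemma margCDF_mono (i : Fin d) : Monotone (margCDF μ X i) := fun u v huv =>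
  ENNReal.toReal_mono (measure_ne_top μ _) (measure_mono fun ω h => le_trans h huv)

lemma margCDF_le_iff (hX : IsMEVFrechet μ X) (i : Fin d) {c : ℝ} (hc0 : 0 < c)
    (hc1 : c < 1) (v : ℝ) :
    margCDF μ X i v ≤ c ↔ v ≤ (-Real.log c)⁻¹ := by
  have hlc : 0 < -Real.log c := neg_pos.2 (Real.log_neg hc0 hc1)
  have hu0 : 0 < (-Real.log c)⁻¹ := inv_pos.2 hlc
  have hcu : Real.exp (-((-Real.log c)⁻¹)⁻¹) = c := by
    rw [inv_inv, neg_neg, Real.exp_log hc0]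
  constructor
  · intro h
    by_contra hv
    push_neg at hv
    have hv0 : 0 < v := hu0.trans hv
    rw [hX.frechet i v hv0] at h
    have hlt : c < Real.exp (-v⁻¹) := by
      rw [← hcu]
      have : v⁻¹ < ((-Real.log c)⁻¹)⁻¹ := by
        rw [inv_inv]
        exact (inv_strictAnti₀ hu0 hv).trans_le (le_of_eq (inv_inv _))
      exact Real.exp_lt_exp.2 (by linarith)
    linarith
  · intro h
    calc margCDF μ X i v ≤ margCDF μ X i (-Real.log c)⁻¹ := margCDF_mono i h
      _ = c := by rw [hX.frechet i _ hu0, hcu]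

lemma msub_le_iff (hX : IsMEVFrechet μ X) (I : Finset (Fin d)) (hI : I.Nonempty)
    {c : ℝ} (hc0 : 0 < c) (hc1 : c < 1) (ω : Ω) :
    Msub μ X I hI ω ≤ c ↔ ∀ i ∈ I, X i ω ≤ (-Real.log c)⁻¹ := by
  rw [Msub, Finset.sup'_le_iff]
  exact forall₂_congr fun i _ => margCDF_le_iff hX i hc0 hc1 _

lemma measA (hX : IsMEVFrechet μ X) (I₁ I₂ : Finset (Fin d)) (a b : ℝ) :
    MeasurableSet {ω | (∀ i ∈ I₁, X i ω ≤ a) ∧ (∀ j ∈ I₂, X j ω ≤ b)} := by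
  have key : ∀ (I : Finset (Fin d)) (r : ℝ), MeasurableSet {ω | ∀ i ∈ I, X i ω ≤ r} := by
    intro I r
    have h : {ω | ∀ i ∈ I, X i ω ≤ r} = ⋂ i ∈ I, {ω | X i ω ≤ r} := by ext ω; simp
    rw [h]
    exact MeasurableSet.biInter I.countable_toSet fun i _ => (hX.meas i) measurableSet_Iic
  rw [Set.setOf_and]
  exact (key I₁ a).inter (key I₂ b)

lemma Gfun_mono (I₁ I₂ : Finset (Fin d)) {a a' b b' : ℝ} (ha : a ≤ a') (hb : b ≤ b') :
    Gfun μ X I₁ I₂ a b ≤ Gfun μ X I₁ I₂ a' b' :=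
  ENNReal.toReal_mono (measure_ne_top μ _) (measure_mono fun ω hω =>
    ⟨fun i hi => (hω.1 i hi).trans ha, fun j hj => (hω.2 j hj).trans hb⟩)

lemma Gfun_le_marg (I₁ I₂ : Finset (Fin d)) {i : Fin d} (hi : i ∈ I₁) (a b : ℝ) :
    Gfun μ X I₁ I₂ a b ≤ margCDF μ X i a :=
  ENNReal.toReal_mono (measure_ne_top μ _) (measure_mono fun ω hω => hω.1 i hi)

lemma Gfun_nonneg (I₁ I₂ : Finset (Fin d)) (a b : ℝ) : 0 ≤ Gfun μ X I₁ I₂ a b :=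
  ENNReal.toReal_nonneg

lemma Gfun_homog (hX : IsMEVFrechet μ X) (I₁ I₂ : Finset (Fin d))
    (hdisj : Disjoint I₁ I₂) {s a b : ℝ} (hs : 0 < s) (ha : 0 < a) (hb : 0 < b) :
    Gfun μ X I₁ I₂ (s * a) (s * b) ^ s = Gfun μ X I₁ I₂ a b := by
  classical
  set c : ℕ → Fin d → ℝ := fun n i => if i ∈ I₁ then a else if i ∈ I₂ then b else (n + 1 : ℝ)
    with hc
  have hcpos : ∀ n i, 0 < c n i := by
    intro n i; simp only [hc]; split_ifs <;> positivity
  have hcmono : ∀ {n m : ℕ}, n ≤ m → ∀ i, c n i ≤ c m i := by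
    intro n m hnm i; simp only [hc]; split_ifs <;> simp [hnm]
  have key : ∀ r : ℝ, 0 < r → Tendsto (fun n => jointCDF μ X (fun i => r * c n i)) atTop
      (𝓝 (Gfun μ X I₁ I₂ (r * a) (r * b))) := by
    intro r hr
    have hmono : Monotone (fun n => {ω | ∀ i, X i ω ≤ r * c n i}) := by
      intro n m hnm ω hω i
      exact le_trans (hω i) (mul_le_mul_of_nonneg_left (hcmono hnm i) hr.le)
    have hunion : (⋃ n, {ω | ∀ i, X i ω ≤ r * c n i}) =
        {ω | (∀ i ∈ I₁, X i ω ≤ r * a) ∧ (∀ j ∈ I₂, X j ω ≤ r * b)} := by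
      ext ω
      simp only [Set.mem_iUnion, Set.mem_setOf_eq]
      constructor
      · rintro ⟨n, hn⟩
        refine ⟨fun i hi => ?_, fun j hj => ?_⟩
        · have := hn i; simpa [hc, hi] using this
        · have := hn j
          have hj1 : j ∉ I₁ := Finset.disjoint_right.mp hdisj hj
          simpa [hc, hj, hj1] using this
      · rintro ⟨hA, hB⟩
        obtain ⟨M, hM⟩ := (Finset.univ.image fun i => X i ω).exists_le
        have hM' : ∀ i, X i ω ≤ M := fun i =>
          hM _ (Finset.mem_image_of_mem _ (Finset.mem_univ i))
        obtain ⟨n, hn⟩ := exists_nat_ge (M / r)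
        refine ⟨n, fun i => ?_⟩
        simp only [hc]
        split_ifs with h1 h2
        · exact hA i h1
        · exact hB i h2
        · refine (hM' i).trans ?_
          rw [← div_le_iff₀' hr] at *
          exact hn.trans (by linarith)
    have h := tendsto_measure_iUnion_atTop (μ := μ) hmono
    rw [hunion] at h
    exact (ENNReal.tendsto_toReal (measure_ne_top μ _)).comp h
  have h1 := key 1 one_pos
  simp only [one_mul] at h1
  have hsK := key s hs
  have h2 : Tendsto (fun n => jointCDF μ X (fun i => s * c n i) ^ s) atTop
      (𝓝 (Gfun μ X I₁ I₂ (s * a) (s * b) ^ s)) :=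
    (Real.continuousAt_rpow_const _ s (Or.inr hs.le)).tendsto.comp hsK
  have heq : ∀ n, jointCDF μ X (fun i => s * c n i) ^ s = jointCDF μ X (c n) := fun n =>
    hX.maxStable s hs (c n) (hcpos n)
  exact tendsto_nhds_unique ((tendsto_congr heq).mp h2) h1

lemma Gfun_tail_bound (hX : IsMEVFrechet μ X) (I₁ I₂ : Finset (Fin d))
    {a b : ℝ} (ha : 0 < a) (hb : 0 < b) :
    1 - ((I₁.card : ℝ) * (1 - Real.exp (-a⁻¹)) + (I₂.card : ℝ) * (1 - Real.exp (-b⁻¹)))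
      ≤ Gfun μ X I₁ I₂ a b := by
  classical
  set A := {ω | (∀ i ∈ I₁, X i ω ≤ a) ∧ (∀ j ∈ I₂, X j ω ≤ b)} with hA
  have hAmeas : MeasurableSet A := measA hX I₁ I₂ a b
  have hmarg : ∀ (i : Fin d) (r : ℝ), 0 < r →
      μ {ω | r < X i ω} = ENNReal.ofReal (1 - Real.exp (-r⁻¹)) := by
    intro i r hr
    have h1 : μ {ω | X i ω ≤ r} = ENNReal.ofReal (Real.exp (-r⁻¹)) := by
      rw [← hX.frechet i r hr]
      exact (ENNReal.ofReal_toReal (measure_ne_top μ _)).symm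
    have h2 : {ω | r < X i ω} = {ω | X i ω ≤ r}ᶜ := by ext ω; simp
    rw [h2, prob_compl_eq_one_sub (s := {ω | X i ω ≤ r}) ((hX.meas i) measurableSet_Iic), h1,
      ← ENNReal.ofReal_one, ← ENNReal.ofReal_sub _ (Real.exp_nonneg _)]
  have hsub : Aᶜ ⊆ (⋃ i ∈ I₁, {ω | a < X i ω}) ∪ ⋃ j ∈ I₂, {ω | b < X j ω} := by
    intro ω hω
    simp only [hA, Set.mem_compl_iff, Set.mem_setOf_eq, not_and_or, not_forall, not_le] at hω
    rcases hω with ⟨i, hi, hlt⟩ | ⟨j, hj, hlt⟩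
    · exact Or.inl (Set.mem_biUnion hi hlt)
    · exact Or.inr (Set.mem_biUnion hj hlt)
  have hr1 : (0:ℝ) ≤ 1 - Real.exp (-a⁻¹) := by
    have : Real.exp (-a⁻¹) ≤ 1 := by
      rw [← Real.exp_zero]; exact Real.exp_le_exp.2 (by simp [ha.le, inv_nonneg])
    linarith
  have hr2 : (0:ℝ) ≤ 1 - Real.exp (-b⁻¹) := by
    have : Real.exp (-b⁻¹) ≤ 1 := by
      rw [← Real.exp_zero]; exact Real.exp_le_exp.2 (by simp [hb.le, inv_nonneg])
    linarith
  have hcompl : μ Aᶜ ≤ ENNReal.ofReal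
      ((I₁.card : ℝ) * (1 - Real.exp (-a⁻¹)) + (I₂.card : ℝ) * (1 - Real.exp (-b⁻¹))) := by
    calc μ Aᶜ ≤ μ ((⋃ i ∈ I₁, {ω | a < X i ω}) ∪ ⋃ j ∈ I₂, {ω | b < X j ω}) :=
        measure_mono hsub
      _ ≤ μ (⋃ i ∈ I₁, {ω | a < X i ω}) + μ (⋃ j ∈ I₂, {ω | b < X j ω}) :=
        measure_union_le _ _
      _ ≤ (∑ i ∈ I₁, μ {ω | a < X i ω}) + ∑ j ∈ I₂, μ {ω | b < X j ω} :=
        add_le_add (measure_biUnion_finset_le _ _) (measure_biUnion_finset_le _ _)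
      _ = I₁.card • ENNReal.ofReal (1 - Real.exp (-a⁻¹))
          + I₂.card • ENNReal.ofReal (1 - Real.exp (-b⁻¹)) := by
        rw [Finset.sum_congr rfl fun i _ => hmarg i a ha,
          Finset.sum_congr rfl fun j _ => hmarg j b hb, Finset.sum_const, Finset.sum_const]
      _ = ENNReal.ofReal ((I₁.card : ℝ) * (1 - Real.exp (-a⁻¹)))
          + ENNReal.ofReal ((I₂.card : ℝ) * (1 - Real.exp (-b⁻¹))) := by
        rw [nsmul_eq_mul, nsmul_eq_mul, ENNReal.ofReal_mul (by positivity),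
          ENNReal.ofReal_mul (by positivity), ENNReal.ofReal_natCast, ENNReal.ofReal_natCast]
      _ = _ := (ENNReal.ofReal_add (by positivity) (by positivity)).symm
  have hsum : (μ A).toReal + (μ Aᶜ).toReal = 1 := by
    rw [← ENNReal.toReal_add (measure_ne_top μ _) (measure_ne_top μ _),
      measure_add_measure_compl hAmeas, measure_univ, ENNReal.toReal_one]
  have hcr : (μ Aᶜ).toReal ≤
      (I₁.card : ℝ) * (1 - Real.exp (-a⁻¹)) + (I₂.card : ℝ) * (1 - Real.exp (-b⁻¹)) :=
    ENNReal.toReal_le_of_le_ofReal (by positivity) hcompl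
  have : Gfun μ X I₁ I₂ a b = (μ A).toReal := rfl
  rw [this]
  linarith

lemma Gfun_pos (hX : IsMEVFrechet μ X) (I₁ I₂ : Finset (Fin d))
    (hdisj : Disjoint I₁ I₂) {a b : ℝ} (ha : 0 < a) (hb : 0 < b) :
    0 < Gfun μ X I₁ I₂ a b := by
  have hexp : ∀ r : ℝ, 0 < r →
      Tendsto (fun n : ℕ => Real.exp (-((n : ℝ) * r)⁻¹)) atTop (𝓝 1) := by
    intro r hr
    have h1 : Tendsto (fun n : ℕ => (n : ℝ) * r) atTop atTop :=
      Tendsto.atTop_mul_const hr tendsto_natCast_atTop_atTop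
    have h2 : Tendsto (fun n : ℕ => ((n : ℝ) * r)⁻¹) atTop (𝓝 0) := h1.inv_tendsto_atTop
    have h3 := h2.neg
    rw [neg_zero] at h3
    have := (Real.continuous_exp.tendsto 0).comp h3
    simpa [Function.comp_def] using this
  have hT : Tendsto (fun n : ℕ => (I₁.card : ℝ) * (1 - Real.exp (-((n : ℝ) * a)⁻¹))
      + (I₂.card : ℝ) * (1 - Real.exp (-((n : ℝ) * b)⁻¹))) atTop (𝓝 0) := by
    have := ((tendsto_const_nhds (x := (I₁.card : ℝ))).mul
        ((tendsto_const_nhds (x := (1:ℝ))).sub (hexp a ha))).add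
      ((tendsto_const_nhds (x := (I₂.card : ℝ))).mul
        ((tendsto_const_nhds (x := (1:ℝ))).sub (hexp b hb)))
    simpa using this
  obtain ⟨n, hn1, hn2⟩ := ((hT.eventually_lt_const one_pos).and (eventually_ge_atTop 1)).exists
  have hn0 : (0:ℝ) < n := by exact_mod_cast hn2
  have hpos : 0 < Gfun μ X I₁ I₂ ((n : ℝ) * a) ((n : ℝ) * b) :=
    lt_of_lt_of_le (by linarith) (Gfun_tail_bound hX I₁ I₂ (by positivity) (by positivity))
  rw [← Gfun_homog hX I₁ I₂ hdisj hn0 ha hb]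
  exact Real.rpow_pos_of_pos hpos _

lemma rpow_cancel {z w s : ℝ} (hz : 0 ≤ z) (hs : s ≠ 0) (h : z ^ s = w) : z = w ^ s⁻¹ := by
  rw [← h, ← Real.rpow_mul hz, mul_inv_cancel₀ hs, Real.rpow_one]

lemma Gfun_scale (hX : IsMEVFrechet μ X) (I₁ I₂ : Finset (Fin d))
    (hdisj : Disjoint I₁ I₂) {t P Q : ℝ} (ht : 0 < t) (hP : 0 < P) (hQ : 0 < Q) :
    Gfun μ X I₁ I₂ (t * P⁻¹) (t * Q⁻¹) =
      Real.exp (Real.log (Gfun μ X I₁ I₂ P⁻¹ Q⁻¹) / t) := by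
  have h := Gfun_homog hX I₁ I₂ hdisj ht (inv_pos.2 hP) (inv_pos.2 hQ)
  have hpos : 0 < Gfun μ X I₁ I₂ P⁻¹ Q⁻¹ :=
    Gfun_pos hX I₁ I₂ hdisj (inv_pos.2 hP) (inv_pos.2 hQ)
  rw [rpow_cancel (Gfun_nonneg _ _ _ _) ht.ne' h, Real.rpow_def_of_pos hpos,
    mul_comm, div_eq_mul_inv, mul_comm]

lemma log_bounds {x t : ℝ} (hx : 0 < x) (hxt : x < t) :
    0 < -Real.log (1 - x / t) ∧ x ≤ t * -Real.log (1 - x / t) ∧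
      t * -Real.log (1 - x / t) ≤ x * t / (t - x) := by
  have ht0 : 0 < t := hx.trans hxt
  have h1 : 0 < 1 - x / t := by
    rw [sub_pos]; exact (div_lt_one ht0).2 hxt
  have h2 : 1 - x / t < 1 := by
    have : 0 < x / t := div_pos hx ht0
    linarith
  refine ⟨neg_pos.2 (Real.log_neg h1 h2), ?_, ?_⟩
  · have h3 := Real.log_le_sub_one_of_pos h1
    have h4 : x / t ≤ -Real.log (1 - x / t) := by linarith
    calc x = t * (x / t) := by field_simp
      _ ≤ t * -Real.log (1 - x / t) := mul_le_mul_of_nonneg_left h4 ht0.le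
  · have h4 : -Real.log (1 - x / t) = Real.log (1 - x / t)⁻¹ := (Real.log_inv _).symm
    have h5 : Real.log (1 - x / t)⁻¹ ≤ (1 - x / t)⁻¹ - 1 :=
      Real.log_le_sub_one_of_pos (inv_pos.2 h1)
    have h6 : t * -Real.log (1 - x / t) ≤ t * ((1 - x / t)⁻¹ - 1) := by
      rw [h4]; exact mul_le_mul_of_nonneg_left h5 ht0.le
    refine h6.trans (le_of_eq ?_)
    have htx : t - x ≠ 0 := by linarith
    have h7 : (1 - x / t)⁻¹ = t / (t - x) := by
      rw [one_sub_div ht0.ne', inv_div]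
    rw [h7]
    field_simp
    ring

lemma tendsto_one_sub_exp_div :
    Tendsto (fun s : ℝ => (1 - Real.exp (-s)) / s) (𝓝[>] (0:ℝ)) (𝓝 1) := by
  have h : Tendsto (slope Real.exp 0) (𝓝[≠] (0:ℝ)) (𝓝 1) := by
    have := hasDerivAt_iff_tendsto_slope.mp (Real.hasDerivAt_exp 0)
    simpa using this
  have hneg : Tendsto (fun s : ℝ => -s) (𝓝[>] (0:ℝ)) (𝓝[≠] (0:ℝ)) := by
    apply tendsto_nhdsWithin_of_tendsto_nhds_of_eventually_within
    · have : Tendsto (fun s : ℝ => -s) (𝓝[>] (0:ℝ)) (𝓝 (-(0:ℝ))) :=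
        (continuous_neg.tendsto 0).mono_left nhdsWithin_le_nhds
      simpa using this
    · filter_upwards [self_mem_nhdsWithin] with s hs
      simp only [Set.mem_compl_iff, Set.mem_singleton_iff]
      have : (0:ℝ) < s := hs
      intro hcon
      rw [neg_eq_zero] at hcon
      exact this.ne' hcon
  refine (h.comp hneg).congr' ?_
  filter_upwards [self_mem_nhdsWithin] with s hs
  have hs0 : s ≠ 0 := ne_of_gt hs
  show slope Real.exp 0 (-s) = (1 - Real.exp (-s)) / s
  rw [slope_def_field]
  simp only [Real.exp_zero, sub_zero]
  rw [div_eq_div_iff (by simpa using hs0) hs0]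
  ring

lemma measure_event (hX : IsMEVFrechet μ X) (I₁ I₂ : Finset (Fin d))
    (h1 : I₁.Nonempty) (h2 : I₂.Nonempty) {t x y : ℝ}
    (hx : 0 < x) (hy : 0 < y) (hxt : x < t) (hyt : y < t) :
    (μ {ω | 1 - x / t < Msub μ X I₁ h1 ω ∨ 1 - y / t < Msub μ X I₂ h2 ω}).toReal
      = 1 - Gfun μ X I₁ I₂ (-Real.log (1 - x / t))⁻¹ (-Real.log (1 - y / t))⁻¹ := by
  have ht0 : 0 < t := hx.trans hxt
  have hx1 : 0 < 1 - x / t := by rw [sub_pos]; exact (div_lt_one ht0).2 hxt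
  have hx2 : 1 - x / t < 1 := by
    have : 0 < x / t := div_pos hx ht0
    linarith
  have hy1 : 0 < 1 - y / t := by rw [sub_pos]; exact (div_lt_one ht0).2 hyt
  have hy2 : 1 - y / t < 1 := by
    have : 0 < y / t := div_pos hy ht0
    linarith
  have hset : {ω | 1 - x / t < Msub μ X I₁ h1 ω ∨ 1 - y / t < Msub μ X I₂ h2 ω}
      = {ω | (∀ i ∈ I₁, X i ω ≤ (-Real.log (1 - x / t))⁻¹)
          ∧ (∀ j ∈ I₂, X j ω ≤ (-Real.log (1 - y / t))⁻¹)}ᶜ := by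
    ext ω
    simp only [Set.mem_setOf_eq, Set.mem_compl_iff, not_and_or]
    rw [← msub_le_iff hX I₁ h1 hx1 hx2 ω, ← msub_le_iff hX I₂ h2 hy1 hy2 ω]
    simp [not_le]
  rw [hset, prob_compl_eq_one_sub (measA hX I₁ I₂ _ _),
    ENNReal.toReal_sub_of_le prob_le_one ENNReal.one_ne_top, ENNReal.toReal_one]
  rfl

end Auxiliary

open scoped Topology

/-- For a MEV distribution with unit Fréchet marginals,
`lim_{t→∞} t·P(M(I₁) > 1 - x/t ∨ M(I₂) > 1 - y/t) = l^{(I₁,I₂)}(x⁻¹,y⁻¹)`, i.e.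
`l^{(I₁,I₂)}(x⁻¹,y⁻¹)` is the bivariate stable tail dependence function of
`(M(I₁), M(I₂))` at `(x,y)`. -/
theorem statement2 {Ω : Type*} [MeasurableSpace Ω] (μ : Measure Ω) [IsProbabilityMeasure μ]
    {d : ℕ} (X : Fin d → Ω → ℝ) (hX : IsMEVFrechet μ X)
    (I₁ I₂ : Finset (Fin d)) (h1 : I₁.Nonempty) (h2 : I₂.Nonempty) (hdisj : Disjoint I₁ I₂)
    (x y : ℝ) (hx : 0 < x) (hy : 0 < y) :
    Tendsto
      (fun t : ℝ =>
        t * (μ {ω | 1 - x / t < Msub μ X I₁ h1 ω ∨ 1 - y / t < Msub μ X I₂ h2 ω}).toReal)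
      atTop (nhds (mevL μ X I₁ I₂ x⁻¹ y⁻¹)) := by
  classical
  have hg0 : 0 < Gfun μ X I₁ I₂ x⁻¹ y⁻¹ :=
    Gfun_pos hX I₁ I₂ hdisj (inv_pos.2 hx) (inv_pos.2 hy)
  set g : ℝ := Gfun μ X I₁ I₂ x⁻¹ y⁻¹ with hgdef
  set L : ℝ := -Real.log g with hLdef
  have hmevL : mevL μ X I₁ I₂ x⁻¹ y⁻¹ = L := rfl
  have hxL : x ≤ L := by
    obtain ⟨i0, hi0⟩ := h1
    have hle : g ≤ Real.exp (-x) := by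
      calc g ≤ margCDF μ X i0 x⁻¹ := Gfun_le_marg I₁ I₂ hi0 x⁻¹ y⁻¹
        _ = Real.exp (-x) := by rw [hX.frechet i0 x⁻¹ (inv_pos.2 hx), inv_inv]
    have := Real.log_le_log hg0 hle
    rw [Real.log_exp] at this
    simp only [hLdef]
    linarith
  have hL0 : 0 < L := lt_of_lt_of_le hx hxL
  set B : ℝ → ℝ := fun t =>
    -Real.log (Gfun μ X I₁ I₂ (t * -Real.log (1 - x / t))⁻¹
      (t * -Real.log (1 - y / t))⁻¹) with hBdef
  -- lower bound for B
  have hBlow : ∀ᶠ t in atTop, L ≤ B t := by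
    filter_upwards [eventually_gt_atTop (max x y)] with t ht
    have hxt : x < t := (le_max_left x y).trans_lt ht
    have hyt : y < t := (le_max_right x y).trans_lt ht
    obtain ⟨hp0, hpx, -⟩ := log_bounds hx hxt
    obtain ⟨hq0, hqy, -⟩ := log_bounds hy hyt
    have hP0 : 0 < t * -Real.log (1 - x / t) := lt_of_lt_of_le hx hpx
    have hQ0 : 0 < t * -Real.log (1 - y / t) := lt_of_lt_of_le hy hqy
    have hGPQ : 0 < Gfun μ X I₁ I₂ (t * -Real.log (1 - x / t))⁻¹
        (t * -Real.log (1 - y / t))⁻¹ :=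
      Gfun_pos hX I₁ I₂ hdisj (inv_pos.2 hP0) (inv_pos.2 hQ0)
    have hmono : Gfun μ X I₁ I₂ (t * -Real.log (1 - x / t))⁻¹
        (t * -Real.log (1 - y / t))⁻¹ ≤ g :=
      Gfun_mono I₁ I₂ (inv_anti₀ hx hpx) (inv_anti₀ hy hqy)
    have := Real.log_le_log hGPQ hmono
    simp only [hBdef, hLdef]
    linarith
  -- upper bound for B
  have hBup : ∀ ε : ℝ, 0 < ε → ∀ᶠ t in atTop, B t ≤ (1 + ε) * L := by
    intro ε hε
    have hbound : ∀ r : ℝ, 0 < r → ∀ᶠ t in atTop, t * -Real.log (1 - r / t) ≤ (1 + ε) * r := by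
      intro r hr
      filter_upwards [eventually_gt_atTop r, eventually_ge_atTop (r * (1 + ε) / ε)] with t hrt hte
      obtain ⟨-, -, hub⟩ := log_bounds hr hrt
      refine hub.trans ?_
      have ht0 : 0 < t := hr.trans hrt
      have htx : 0 < t - r := by linarith
      rw [div_le_iff₀ htx]
      have h8 : r * (1 + ε) ≤ t * ε := by
        rw [div_le_iff₀ hε] at hte
        linarith
      nlinarith
    filter_upwards [hbound x hx, hbound y hy, eventually_gt_atTop (max x y)] with t hPe hQe ht
    have hxt : x < t := (le_max_left x y).trans_lt ht
    have hyt : y < t := (le_max_right x y).trans_lt ht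
    obtain ⟨-, hpx, -⟩ := log_bounds hx hxt
    obtain ⟨-, hqy, -⟩ := log_bounds hy hyt
    have hP0 : 0 < t * -Real.log (1 - x / t) := lt_of_lt_of_le hx hpx
    have hQ0 : 0 < t * -Real.log (1 - y / t) := lt_of_lt_of_le hy hqy
    have h1ε : (0:ℝ) < 1 + ε := by linarith
    -- Gfun (((1+ε)x)⁻¹) (((1+ε)y)⁻¹) = g^(1+ε)
    have hGε : Gfun μ X I₁ I₂ ((1 + ε) * x)⁻¹ ((1 + ε) * y)⁻¹ = g ^ (1 + ε) := by
      have h := Gfun_homog hX I₁ I₂ hdisj (s := (1 + ε)⁻¹) (a := x⁻¹) (b := y⁻¹)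
        (inv_pos.2 h1ε) (inv_pos.2 hx) (inv_pos.2 hy)
      rw [← mul_inv, ← mul_inv] at h
      have := rpow_cancel (Gfun_nonneg _ _ _ _) (inv_ne_zero h1ε.ne') h
      rwa [inv_inv, ← hgdef] at this
    have hGεpos : 0 < g ^ (1 + ε) := Real.rpow_pos_of_pos hg0 _
    have hmono : g ^ (1 + ε) ≤ Gfun μ X I₁ I₂ (t * -Real.log (1 - x / t))⁻¹
        (t * -Real.log (1 - y / t))⁻¹ := by
      rw [← hGε]
      exact Gfun_mono I₁ I₂ (inv_anti₀ hP0 hPe) (inv_anti₀ hQ0 hQe)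
    have hlog := Real.log_le_log hGεpos hmono
    rw [Real.log_rpow hg0] at hlog
    simp only [hBdef, hLdef]
    nlinarith [hlog]
  -- B tends to L
  have hBtend : Tendsto B atTop (𝓝 L) := by
    rw [tendsto_order]
    constructor
    · intro c hc
      filter_upwards [hBlow] with t ht
      exact lt_of_lt_of_le hc ht
    · intro c hc
      have hε : 0 < (c - L) / (2 * L) := div_pos (by linarith) (by linarith)
      filter_upwards [hBup _ hε] with t ht
      refine lt_of_le_of_lt ht ?_
      have heq : (1 + (c - L) / (2 * L)) * L = L + (c - L) / 2 := by
        field_simp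
      rw [heq]
      linarith
  -- conclude
  have hst : Tendsto (fun t => B t / t) atTop (𝓝 0) := hBtend.div_atTop tendsto_id
  have hst' : Tendsto (fun t => B t / t) atTop (𝓝[>] 0) := by
    apply tendsto_nhdsWithin_of_tendsto_nhds_of_eventually_within _ hst
    filter_upwards [hBlow, eventually_gt_atTop 0] with t hb ht0
    exact div_pos (lt_of_lt_of_le hL0 hb) ht0
  have hmain : Tendsto (fun t => B t * ((1 - Real.exp (-(B t / t))) / (B t / t))) atTop
      (𝓝 (L * 1)) := hBtend.mul (tendsto_one_sub_exp_div.comp hst')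
  rw [mul_one] at hmain
  rw [hmevL]
  apply hmain.congr'
  filter_upwards [eventually_gt_atTop (max x y), hBlow] with t ht hBl
  have hxt : x < t := (le_max_left x y).trans_lt ht
  have hyt : y < t := (le_max_right x y).trans_lt ht
  have ht0 : 0 < t := hx.trans hxt
  obtain ⟨hp0, hpx, -⟩ := log_bounds hx hxt
  obtain ⟨hq0, hqy, -⟩ := log_bounds hy hyt
  have hP0 : 0 < t * -Real.log (1 - x / t) := lt_of_lt_of_le hx hpx
  have hQ0 : 0 < t * -Real.log (1 - y / t) := lt_of_lt_of_le hy hqy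
  -- rewrite the measure
  have hμ := measure_event hX I₁ I₂ h1 h2 hx hy hxt hyt
  have e1 : (-Real.log (1 - x / t))⁻¹ = t * (t * -Real.log (1 - x / t))⁻¹ := by
    rw [mul_inv, ← mul_assoc, mul_inv_cancel₀ ht0.ne', one_mul]
  have e2 : (-Real.log (1 - y / t))⁻¹ = t * (t * -Real.log (1 - y / t))⁻¹ := by
    rw [mul_inv, ← mul_assoc, mul_inv_cancel₀ ht0.ne', one_mul]
  rw [e1, e2, Gfun_scale hX I₁ I₂ hdisj ht0 hP0 hQ0] at hμ
  have hlogB : Real.log (Gfun μ X I₁ I₂ (t * -Real.log (1 - x / t))⁻¹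
      (t * -Real.log (1 - y / t))⁻¹) = -B t := by
    simp only [hBdef, neg_neg]
  rw [hlogB] at hμ
  have hμ' : (μ {ω | 1 - x / t < Msub μ X I₁ h1 ω ∨ 1 - y / t < Msub μ X I₂ h2 ω}).toReal
      = 1 - Real.exp (-(B t / t)) := by
    rw [hμ, neg_div]
  have hB0 : B t ≠ 0 := (lt_of_lt_of_le hL0 hBl).ne'
  rw [hμ']
  field_simp
end

section
/- Let X = (X₁,…,X_d) be a random vector whose joint distribution function F is a MEV distribution with unit Fréchet marginals, and let I₁, I₂ be disjoint non-empty subsets of {1,…,d}. Then 0 ≤ ε_{(I₁,I₂)} ≤ min( ε_{I₁}, ε_{I₂} ), where ε_{(I₁,I₂)} = ε_{I₁} + ε_{I₂} − ε_{I₁∪I₂}. -/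
open MeasureTheory Filter Finset

section MEVAux

variable {Ω : Type*} [MeasurableSpace Ω] {d : ℕ}

lemma mev_measSet_aux (μ : Measure Ω) (X : Fin d → Ω → ℝ) (hm : ∀ i, Measurable (X i))
    (I : Finset (Fin d)) (s : ℝ) : MeasurableSet {ω | ∀ i ∈ I, X i ω ≤ s} := by
  have h : {ω | ∀ i ∈ I, X i ω ≤ s} = ⋂ i ∈ I, {ω | X i ω ≤ s} := by
    ext ω; simp
  rw [h]
  exact MeasurableSet.biInter I.countable_toSet fun i _ => (hm i) measurableSet_Iic

lemma mev_tendsto_slope_rpow_log {x : ℝ} (hx : 0 < x) :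
    Tendsto (fun h : ℝ => (x ^ h - 1) / h) (nhdsWithin 0 (Set.Ioi 0)) (nhds (Real.log x)) := by
  have hd : HasDerivAt (fun h : ℝ => x ^ h) (Real.log x) 0 := by
    have h1 : HasDerivAt (fun h : ℝ => Real.log x * h) (Real.log x) 0 := by
      simpa using (hasDerivAt_id (0 : ℝ)).const_mul (Real.log x)
    have h2 := h1.exp
    simp only [mul_zero, Real.exp_zero, one_mul] at h2
    have hfun : (fun h : ℝ => x ^ h) = fun h : ℝ => Real.exp (Real.log x * h) :=
      funext fun h => Real.rpow_def_of_pos hx h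
    rw [hfun]
    exact h2
  rw [hasDerivAt_iff_tendsto_slope] at hd
  have hmono : nhdsWithin (0:ℝ) (Set.Ioi 0) ≤ nhdsWithin (0:ℝ) {(0:ℝ)}ᶜ :=
    nhdsWithin_mono 0 (fun y hy => ne_of_gt hy)
  refine (hd.mono_left hmono).congr (fun h => ?_)
  rw [slope_def_field]
  simp [Real.rpow_zero]

lemma mev_tendsto_level_aux (μ : Measure Ω) [IsProbabilityMeasure μ] (X : Fin d → Ω → ℝ)
    (I : Finset (Fin d)) {c : ℝ} (hc : 0 < c) :
    Tendsto (fun n : ℕ => (μ {ω | ∀ i, X i ω ≤ c * (if i ∈ I then 1 else (n+1 : ℝ))}).toReal)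
      atTop (nhds ((μ {ω | ∀ i ∈ I, X i ω ≤ c}).toReal)) := by
  set S : ℕ → Set Ω := fun n => {ω | ∀ i, X i ω ≤ c * (if i ∈ I then 1 else (n+1 : ℝ))} with hS
  have hmono : Monotone S := by
    intro n m hnm ω hω i
    refine le_trans (hω i) (mul_le_mul_of_nonneg_left ?_ hc.le)
    by_cases h : i ∈ I <;> simp [h]
    exact_mod_cast hnm
  have hunion : (⋃ n, S n) = {ω | ∀ i ∈ I, X i ω ≤ c} := by
    ext ω
    simp only [Set.mem_iUnion, hS, Set.mem_setOf_eq]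
    constructor
    · rintro ⟨n, hn⟩ i hi
      have := hn i
      simpa [hi] using this
    · intro hω
      obtain ⟨M, hM⟩ := Finite.exists_le fun i => X i ω / c
      obtain ⟨n, hn⟩ := exists_nat_ge M
      refine ⟨n, fun i => ?_⟩
      by_cases h : i ∈ I
      · simpa [h] using hω i h
      · simp only [h, if_false]
        rw [mul_comm, ← div_le_iff₀ hc]
        calc X i ω / c ≤ M := hM i
          _ ≤ n := hn
          _ ≤ n + 1 := by linarith
  have h1 : Tendsto (fun n => μ (S n)) atTop (nhds (μ (⋃ n, S n))) :=
    tendsto_measure_iUnion_atTop hmono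
  rw [hunion] at h1
  exact (ENNReal.tendsto_toReal (measure_ne_top μ _)).comp h1

lemma mev_scaling_aux (μ : Measure Ω) [IsProbabilityMeasure μ] (X : Fin d → Ω → ℝ)
    (hmax : ∀ t : ℝ, 0 < t → ∀ x : Fin d → ℝ, (∀ i, 0 < x i) →
      ((μ {ω | ∀ i, X i ω ≤ t * x i}).toReal) ^ t = (μ {ω | ∀ i, X i ω ≤ x i}).toReal)
    (I : Finset (Fin d)) {s : ℝ} (hs : 0 < s) :
    ((μ {ω | ∀ i ∈ I, X i ω ≤ s}).toReal) ^ s = (μ {ω | ∀ i ∈ I, X i ω ≤ 1}).toReal := by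
  set x : ℕ → Fin d → ℝ := fun n i => if i ∈ I then 1 else (n+1 : ℝ) with hx
  have hxpos : ∀ n i, 0 < x n i := by
    intro n i
    by_cases h : i ∈ I <;> simp [hx, h]
    positivity
  have h1 : Tendsto (fun n : ℕ => (μ {ω | ∀ i, X i ω ≤ x n i}).toReal) atTop
      (nhds ((μ {ω | ∀ i ∈ I, X i ω ≤ 1}).toReal)) := by
    have := mev_tendsto_level_aux μ X I one_pos
    simpa [hx] using this
  have h2 : Tendsto (fun n : ℕ => (μ {ω | ∀ i, X i ω ≤ s * x n i}).toReal) atTop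
      (nhds ((μ {ω | ∀ i ∈ I, X i ω ≤ s}).toReal)) := mev_tendsto_level_aux μ X I hs
  have h2' : Tendsto (fun n : ℕ => ((μ {ω | ∀ i, X i ω ≤ s * x n i}).toReal) ^ s) atTop
      (nhds (((μ {ω | ∀ i ∈ I, X i ω ≤ s}).toReal) ^ s)) :=
    ((Real.continuousAt_rpow_const _ s (Or.inr hs.le)).tendsto).comp h2
  have heq : ∀ n : ℕ, ((μ {ω | ∀ i, X i ω ≤ s * x n i}).toReal) ^ s
      = (μ {ω | ∀ i, X i ω ≤ x n i}).toReal := fun n => hmax s hs (x n) (hxpos n)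
  exact tendsto_nhds_unique (h2'.congr heq) h1

lemma mev_pos_aux (μ : Measure Ω) [IsProbabilityMeasure μ] (X : Fin d → Ω → ℝ)
    (hmeas : ∀ i, Measurable (X i))
    (hfrechet : ∀ i, ∀ u : ℝ, 0 < u → (μ {ω | X i ω ≤ u}).toReal = Real.exp (-u⁻¹))
    (hmax : ∀ t : ℝ, 0 < t → ∀ x : Fin d → ℝ, (∀ i, 0 < x i) →
      ((μ {ω | ∀ i, X i ω ≤ t * x i}).toReal) ^ t = (μ {ω | ∀ i, X i ω ≤ x i}).toReal) :
    0 < (μ {ω | ∀ i, X i ω ≤ (1:ℝ)}).toReal := by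
  set t : ℝ := (d : ℝ) + 1 with ht
  have htpos : 0 < t := by positivity
  have hAm : MeasurableSet {ω | ∀ i, X i ω ≤ t} := by
    have h : {ω | ∀ i, X i ω ≤ t} = ⋂ i, {ω | X i ω ≤ t} := by ext ω; simp
    rw [h]; exact MeasurableSet.iInter fun i => (hmeas i) measurableSet_Iic
  have hterm : ∀ i : Fin d, (μ {ω | X i ω ≤ t}ᶜ).toReal ≤ t⁻¹ := by
    intro i
    have hm : MeasurableSet {ω | X i ω ≤ t} := (hmeas i) measurableSet_Iic
    have hadd : μ {ω | X i ω ≤ t} + μ {ω | X i ω ≤ t}ᶜ = 1 := by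
      rw [measure_add_measure_compl hm, measure_univ]
    have hadd2 : (μ {ω | X i ω ≤ t}).toReal + (μ {ω | X i ω ≤ t}ᶜ).toReal = 1 := by
      rw [← ENNReal.toReal_add (measure_ne_top μ _) (measure_ne_top μ _), hadd, ENNReal.toReal_one]
    have hfr := hfrechet i t htpos
    have hexp : 1 - t⁻¹ ≤ Real.exp (-t⁻¹) := by
      have := Real.add_one_le_exp (-t⁻¹); linarith
    linarith
  have hcompl : (μ {ω | ∀ i, X i ω ≤ t}ᶜ).toReal ≤ (d : ℝ) * t⁻¹ := by
    have hsub : {ω | ∀ i, X i ω ≤ t}ᶜ ⊆ ⋃ i, {ω | X i ω ≤ t}ᶜ := by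
      intro ω hω
      simp only [Set.mem_compl_iff, Set.mem_setOf_eq, not_forall] at hω
      obtain ⟨i, hi⟩ := hω
      exact Set.mem_iUnion.2 ⟨i, hi⟩
    calc (μ {ω | ∀ i, X i ω ≤ t}ᶜ).toReal
        ≤ (∑ i : Fin d, μ {ω | X i ω ≤ t}ᶜ).toReal := by
          refine ENNReal.toReal_mono (ENNReal.sum_ne_top.2 fun i _ => measure_ne_top μ _) ?_
          refine (measure_mono hsub).trans ?_
          refine (measure_iUnion_le _).trans_eq ?_
          exact tsum_fintype _
      _ = ∑ i : Fin d, (μ {ω | X i ω ≤ t}ᶜ).toReal :=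
          ENNReal.toReal_sum fun i _ => measure_ne_top μ _
      _ ≤ ∑ _i : Fin d, t⁻¹ := Finset.sum_le_sum fun i _ => hterm i
      _ = (d : ℝ) * t⁻¹ := by simp [mul_comm]
  have hA : 0 < (μ {ω | ∀ i, X i ω ≤ t}).toReal := by
    have hadd : (μ {ω | ∀ i, X i ω ≤ t}).toReal + (μ {ω | ∀ i, X i ω ≤ t}ᶜ).toReal = 1 := by
      rw [← ENNReal.toReal_add (measure_ne_top μ _) (measure_ne_top μ _),
        measure_add_measure_compl hAm, measure_univ, ENNReal.toReal_one]
    have hlt : (d : ℝ) * t⁻¹ < 1 := by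
      rw [ht, mul_inv_lt_iff₀' (by positivity)]
      linarith
    linarith
  have hms := hmax t htpos (fun _ => 1) (fun _ => one_pos)
  simp only [mul_one] at hms
  rw [← hms]
  exact Real.rpow_pos_of_pos hA t

end MEVAux

/-- Bounds for the extremal coefficient of dependence:
`0 ≤ ε_{(I₁,I₂)} ≤ min(ε_{I₁}, ε_{I₂})`, where `ε_{(I₁,I₂)} = ε_{I₁} + ε_{I₂} - ε_{I₁∪I₂}`. -/
theorem statement5 {Ω : Type*} [MeasurableSpace Ω] (μ : Measure Ω) [IsProbabilityMeasure μ]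
    {d : ℕ} (X : Fin d → Ω → ℝ) (hX : IsMEVFrechet μ X)
    (I₁ I₂ : Finset (Fin d)) (h1 : I₁.Nonempty) (h2 : I₂.Nonempty) (hdisj : Disjoint I₁ I₂) :
    0 ≤ extCoef μ X I₁ + extCoef μ X I₂ - extCoef μ X (I₁ ∪ I₂) ∧
    extCoef μ X I₁ + extCoef μ X I₂ - extCoef μ X (I₁ ∪ I₂)
      ≤ min (extCoef μ X I₁) (extCoef μ X I₂) := by
  have hfre : ∀ i, ∀ u : ℝ, 0 < u → (μ {ω | X i ω ≤ u}).toReal = Real.exp (-u⁻¹) := by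
    intro i u hu; simpa [margCDF] using hX.frechet i u hu
  have hmax : ∀ t : ℝ, 0 < t → ∀ x : Fin d → ℝ, (∀ i, 0 < x i) →
      ((μ {ω | ∀ i, X i ω ≤ t * x i}).toReal) ^ t = (μ {ω | ∀ i, X i ω ≤ x i}).toReal := by
    intro t ht x hx; simpa [jointCDF] using hX.maxStable t ht x hx
  set p : Finset (Fin d) → ℝ → ℝ := fun I s => (μ {ω | ∀ i ∈ I, X i ω ≤ s}).toReal with hp
  have hext : ∀ I : Finset (Fin d), extCoef μ X I = -Real.log (p I 1) := by
    intro I; simp [extCoef, mevL, hp]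
  have hq := mev_pos_aux μ X hX.meas hfre hmax
  have hposI : ∀ I : Finset (Fin d), 0 < p I 1 := by
    intro I
    refine lt_of_lt_of_le hq (ENNReal.toReal_mono (measure_ne_top μ _) (measure_mono ?_))
    intro ω hω i _
    exact hω i
  have hle1 : ∀ I s, p I s ≤ (1 : ℝ) := by
    intro I s
    have h := ENNReal.toReal_mono (measure_ne_top μ Set.univ)
      (measure_mono (Set.subset_univ {ω | ∀ i ∈ I, X i ω ≤ s}))
    simpa [hp] using h
  have hkey : ∀ (I : Finset (Fin d)) (h : ℝ), 0 < h → p I 1 ^ h = p I h⁻¹ := by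
    intro I h hh
    have hs : (0:ℝ) < h⁻¹ := by positivity
    have hscale := mev_scaling_aux μ X hmax I hs
    rw [hp]
    dsimp only
    rw [← hscale, ← Real.rpow_mul ENNReal.toReal_nonneg, inv_mul_cancel₀ hh.ne', Real.rpow_one]
  have hins : ∀ s : ℝ, p I₁ s + p I₂ s - 1 ≤ p (I₁ ∪ I₂) s := by
    intro s
    have hset : {ω | ∀ i ∈ I₁ ∪ I₂, X i ω ≤ s}
        = {ω | ∀ i ∈ I₁, X i ω ≤ s} ∩ {ω | ∀ i ∈ I₂, X i ω ≤ s} := by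
      ext ω; simp only [Set.mem_setOf_eq, Set.mem_inter_iff, Finset.mem_union, or_imp,
        forall_and]
    have hB : MeasurableSet {ω | ∀ i ∈ I₂, X i ω ≤ s} := mev_measSet_aux μ X hX.meas I₂ s
    have hiu := measure_union_add_inter (μ := μ) {ω | ∀ i ∈ I₁, X i ω ≤ s} hB
    have hiu' := congrArg ENNReal.toReal hiu
    rw [ENNReal.toReal_add (measure_ne_top μ _) (measure_ne_top μ _),
      ENNReal.toReal_add (measure_ne_top μ _) (measure_ne_top μ _)] at hiu'
    have hu1 : (μ ({ω | ∀ i ∈ I₁, X i ω ≤ s} ∪ {ω | ∀ i ∈ I₂, X i ω ≤ s})).toReal ≤ 1 := by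
      have h := ENNReal.toReal_mono (measure_ne_top μ Set.univ)
        (measure_mono (Set.subset_univ
          ({ω | ∀ i ∈ I₁, X i ω ≤ s} ∪ {ω | ∀ i ∈ I₂, X i ω ≤ s})))
      simpa using h
    rw [hp]
    dsimp only
    rw [hset]
    linarith
  have hloga : Real.log (p I₁ 1) + Real.log (p I₂ 1) ≤ Real.log (p (I₁ ∪ I₂) 1) := by
    refine le_of_tendsto_of_tendsto
      ((mev_tendsto_slope_rpow_log (hposI I₁)).add (mev_tendsto_slope_rpow_log (hposI I₂)))
      (mev_tendsto_slope_rpow_log (hposI (I₁ ∪ I₂))) ?_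
    filter_upwards [self_mem_nhdsWithin] with h hh
    have hh' : (0:ℝ) < h := hh
    have hineq : p I₁ 1 ^ h + p I₂ 1 ^ h - 1 ≤ p (I₁ ∪ I₂) 1 ^ h := by
      rw [hkey I₁ h hh', hkey I₂ h hh', hkey (I₁ ∪ I₂) h hh']
      exact hins h⁻¹
    show (p I₁ 1 ^ h - 1) / h + (p I₂ 1 ^ h - 1) / h ≤ (p (I₁ ∪ I₂) 1 ^ h - 1) / h
    rw [← add_div]
    gcongr
    linarith
  have hmono12 : ∀ J K : Finset (Fin d), J ⊆ K → p K 1 ≤ p J 1 := by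
    intro J K hJK
    refine ENNReal.toReal_mono (measure_ne_top μ _) (measure_mono ?_)
    intro ω hω i hi
    exact hω i (hJK hi)
  have hlog1 : Real.log (p (I₁ ∪ I₂) 1) ≤ Real.log (p I₁ 1) :=
    (Real.log_le_log_iff (hposI _) (hposI _)).2 (hmono12 _ _ Finset.subset_union_left)
  have hlog2 : Real.log (p (I₁ ∪ I₂) 1) ≤ Real.log (p I₂ 1) :=
    (Real.log_le_log_iff (hposI _) (hposI _)).2 (hmono12 _ _ Finset.subset_union_right)
  rw [hext I₁, hext I₂, hext (I₁ ∪ I₂)]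
  refine ⟨by linarith, ?_⟩
  rw [le_min_iff]
  constructor <;> linarith
end

section
/- Let X = (X₁,…,X_d) be a random vector whose joint distribution function F is a MEV distribution with unit Fréchet marginals, and let I₁, I₂ be disjoint non-empty subsets of {1,…,d}. Then for all (x,y), (x*,y*) ∈ [0,∞]² \ {(∞,∞)}, |Λ_U^{(I₁,I₂)}(x,y) − Λ_U^{(I₁,I₂)}(x*,y*)| ≤ |I₁|·|x − x*| + |I₂|·|y − y*|, where |I| denotes the cardinality of I. -/
open MeasureTheory Filter Finset

open ENNReal in
/-- The upper-tail dependence function `Λ_U^{(I₁,I₂)}` extended to `[0,∞]²` by the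
conventions `1/0 = ∞`, `1/∞ = 0`, so that `Λ_U(0,y) = Λ_U(x,0) = 0`,
`Λ_U(∞,y) = yε_{I₂}` and `Λ_U(x,∞) = xε_{I₁}`. -/
noncomputable def lambdaUExt {Ω : Type*} [MeasurableSpace Ω] (μ : Measure Ω) {d : ℕ}
    (X : Fin d → Ω → ℝ) (I₁ I₂ : Finset (Fin d)) (x y : ℝ≥0∞) : ℝ :=
  if x = 0 ∨ y = 0 then 0
  else if x = ∞ then y.toReal * extCoef μ X I₂
  else if y = ∞ then x.toReal * extCoef μ X I₁
  else x.toReal * extCoef μ X I₁ + y.toReal * extCoef μ X I₂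
    - mevL μ X I₁ I₂ x.toReal⁻¹ y.toReal⁻¹

set_option linter.unusedSectionVars false
open scoped ENNReal

lemma exp_gap {a b : ℝ} (h0 : 0 ≤ a) (h : a ≤ b) :
    Real.exp (-a) - Real.exp (-b) ≤ b - a := by
  have e1 : Real.exp (-a) ≤ 1 := Real.exp_le_one_iff.2 (by linarith)
  have e2 : (a - b) + 1 ≤ Real.exp (a - b) := Real.add_one_le_exp _
  have e3 : Real.exp (a - b) * Real.exp (-a) = Real.exp (-b) := by
    rw [← Real.exp_add]; ring_nf
  have e4 : 0 < Real.exp (-a) := Real.exp_pos _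
  nlinarith


/-- pure analysis core lemma -/
lemma core_scaling {A A' K D : ℝ} (hK : 0 ≤ K) (hD : 0 ≤ D) (u v : ℝ → ℝ)
    (hu : ∀ c, 1 ≤ c → 0 < u c) (huv : ∀ c, 1 ≤ c → u c ≤ v c)
    (hgap : ∀ c, 1 ≤ c → v c - u c ≤ K / c)
    (hlow : ∀ c, 1 ≤ c → 1 - D / c ≤ u c)
    (hA : ∀ c, 1 ≤ c → u c ^ c = A) (hA' : ∀ c, 1 ≤ c → v c ^ c = A') :
    Real.log A' - Real.log A ≤ K := by
  refine le_of_forall_pos_le_add fun ε hε => ?_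
  set c : ℝ := 1 + D + (K + ε) * D / ε with hc
  have hc1 : 1 ≤ c := by
    have : 0 ≤ (K + ε) * D / ε := by positivity
    simp only [hc]; linarith
  have hcpos : 0 < c := by linarith
  have hcD : D < c := by
    have : 0 ≤ (K + ε) * D / ε := by positivity
    simp only [hc]; linarith
  have hupos := hu c hc1
  have hvpos : 0 < v c := lt_of_lt_of_le hupos (huv c hc1)
  have hlogA : Real.log A = c * Real.log (u c) := by
    rw [← hA c hc1, Real.log_rpow hupos]
  have hlogA' : Real.log A' = c * Real.log (v c) := by
    rw [← hA' c hc1, Real.log_rpow hvpos]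
  have hlog : Real.log (v c) - Real.log (u c) ≤ (v c - u c) / u c := by
    have h1 : Real.log (v c / u c) ≤ v c / u c - 1 :=
      Real.log_le_sub_one_of_pos (by positivity)
    rw [Real.log_div hvpos.ne' hupos.ne'] at h1
    have : v c / u c - 1 = (v c - u c) / u c := by field_simp
    linarith [this ▸ h1]
  have hub : 1 - D / c ≤ u c := hlow c hc1
  have hDc : 0 < 1 - D / c := by
    have : D / c < 1 := (div_lt_one hcpos).2 hcD
    linarith
  have key : c * (Real.log (v c) - Real.log (u c)) ≤ K / (1 - D / c) := by
    have h2 : (v c - u c) / u c ≤ (K / c) / (1 - D / c) := by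
      apply div_le_div₀ (by positivity) (hgap c hc1) hDc hub
        |>.trans_eq rfl
    calc c * (Real.log (v c) - Real.log (u c)) ≤ c * ((v c - u c) / u c) := by
          apply mul_le_mul_of_nonneg_left hlog hcpos.le
      _ ≤ c * ((K / c) / (1 - D / c)) := mul_le_mul_of_nonneg_left h2 hcpos.le
      _ = K / (1 - D / c) := by field_simp
  have hfin : K / (1 - D / c) ≤ K + ε := by
    rw [div_le_iff₀ hDc]
    have hεc : (K + ε) * D ≤ ε * c := by
      have h3 : (K + ε) * D / ε ≤ c := by simp only [hc]; linarith
      calc (K + ε) * D = ((K + ε) * D / ε) * ε := by field_simp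
        _ ≤ c * ε := mul_le_mul_of_nonneg_right h3 hε.le
        _ = ε * c := mul_comm _ _
    have expand : (K + ε) * (1 - D / c) = (K + ε) - (K + ε) * D / c := by ring
    rw [expand]
    have : (K + ε) * D / c ≤ ε := by
      rw [div_le_iff₀ hcpos]; linarith [hεc]
    linarith
  calc Real.log A' - Real.log A = c * (Real.log (v c) - Real.log (u c)) := by
        rw [hlogA, hlogA']; ring
    _ ≤ K / (1 - D / c) := key
    _ ≤ K + ε := hfin


lemma mul_le_one_iff_le_inv {s x : ℝ} (hs : 0 < s) : s * x ≤ 1 ↔ x ≤ s⁻¹ := by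
  rw [inv_eq_one_div, le_div_iff₀' hs]


section Aux

variable {Ω : Type*} [MeasurableSpace Ω] (μ : Measure Ω) [IsProbabilityMeasure μ]
  {d : ℕ} (X : Fin d → Ω → ℝ) (I₁ I₂ : Finset (Fin d))

def pset (s t : ℝ) : Set Ω :=
  {ω | (∀ i ∈ I₁, s * X i ω ≤ 1) ∧ (∀ j ∈ I₂, t * X j ω ≤ 1)}

noncomputable def qv (s t : ℝ) : ℝ := (μ (pset X I₁ I₂ s t)).toReal

variable {X}

lemma pset_swap (s t : ℝ) : pset X I₁ I₂ s t = pset X I₂ I₁ t s := by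
  ext ω; exact and_comm

lemma qv_swap (s t : ℝ) : qv μ X I₁ I₂ s t = qv μ X I₂ I₁ t s := by
  rw [qv, qv, pset_swap]

lemma measurableSet_pset (hX : IsMEVFrechet μ X) (s t : ℝ) :
    MeasurableSet (pset X I₁ I₂ s t) := by
  have h1 : pset X I₁ I₂ s t =
      (⋂ i ∈ I₁, {ω | s * X i ω ≤ 1}) ∩ (⋂ j ∈ I₂, {ω | t * X j ω ≤ 1}) := by
    ext ω; simp [pset, Set.mem_iInter]
  rw [h1]
  exact (MeasurableSet.biInter (Set.to_countable _) fun i _ =>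
      measurableSet_le (measurable_const.mul (hX.meas i)) measurable_const).inter
    (MeasurableSet.biInter (Set.to_countable _) fun j _ =>
      measurableSet_le (measurable_const.mul (hX.meas j)) measurable_const)

lemma pset_anti {s s' t : ℝ} (hs : 0 ≤ s) (hss : s ≤ s') :
    pset X I₁ I₂ s' t ⊆ pset X I₁ I₂ s t := by
  rintro ω ⟨hA, hB⟩
  refine ⟨fun i hi => ?_, hB⟩
  rcases le_total 0 (X i ω) with hx | hx
  · calc s * X i ω ≤ s' * X i ω := mul_le_mul_of_nonneg_right hss hx
      _ ≤ 1 := hA i hi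
  · have : s * X i ω ≤ 0 := mul_nonpos_iff.2 (Or.inl ⟨hs, hx⟩)
    linarith

lemma qv_anti1 {s s' t : ℝ} (hs : 0 ≤ s) (hss : s ≤ s') :
    qv μ X I₁ I₂ s' t ≤ qv μ X I₁ I₂ s t :=
  ENNReal.toReal_mono (measure_ne_top μ _) (measure_mono (pset_anti I₁ I₂ hs hss))

lemma qv_nonneg (s t : ℝ) : 0 ≤ qv μ X I₁ I₂ s t := ENNReal.toReal_nonneg

lemma qv_le_one (s t : ℝ) : qv μ X I₁ I₂ s t ≤ 1 := by
  have := prob_le_one (μ := μ) (s := pset X I₁ I₂ s t)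
  have h := ENNReal.toReal_mono (by simp) this
  simpa [qv] using h

lemma qv_zero_zero : qv μ X I₁ I₂ 0 0 = 1 := by
  have : pset X I₁ I₂ (0:ℝ) 0 = Set.univ := by
    ext ω; simp [pset]
  rw [qv, this]; simp

lemma marg_measure (hX : IsMEVFrechet μ X) (i : Fin d) {u : ℝ} (hu : 0 < u) :
    μ {ω | X i ω ≤ u} = ENNReal.ofReal (Real.exp (-u⁻¹)) := by
  have h := hX.frechet i u hu
  rw [margCDF] at h
  rw [← ENNReal.ofReal_toReal (measure_ne_top μ _), h]

lemma tail_bound (hX : IsMEVFrechet μ X) (i : Fin d) {s : ℝ} (hs : 0 ≤ s) :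
    μ {ω | ¬ s * X i ω ≤ 1} ≤ ENNReal.ofReal s := by
  rcases eq_or_lt_of_le hs with rfl | hs'
  · have : {ω | ¬ (0:ℝ) * X i ω ≤ 1} = (∅ : Set Ω) := by
      ext ω; simp
    simp [this]
  · have hset : {ω | ¬ s * X i ω ≤ 1} = {ω | X i ω ≤ s⁻¹}ᶜ := by
      ext ω
      simp only [Set.mem_setOf_eq, Set.mem_compl_iff]
      exact not_congr (mul_le_one_iff_le_inv hs')
    have hmeas : MeasurableSet {ω | X i ω ≤ s⁻¹} :=
      measurableSet_le (hX.meas i) measurable_const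
    rw [hset, prob_compl_eq_one_sub hmeas, marg_measure μ hX i (by positivity), inv_inv]
    have hexp1 : Real.exp (-s) ≤ 1 := Real.exp_le_one_iff.2 (by linarith)
    have hexp0 : 0 ≤ Real.exp (-s) := (Real.exp_pos _).le
    have h1 : (1 : ℝ≥0∞) ≤ ENNReal.ofReal (1 - Real.exp (-s)) + ENNReal.ofReal (Real.exp (-s)) := by
      rw [← ENNReal.ofReal_add (by linarith) hexp0]
      simp
    have h2 : (1 : ℝ≥0∞) - ENNReal.ofReal (Real.exp (-s)) ≤ ENNReal.ofReal (1 - Real.exp (-s)) :=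
      tsub_le_iff_right.2 h1
    refine h2.trans (ENNReal.ofReal_le_ofReal ?_)
    nlinarith [Real.add_one_le_exp (-s)]

lemma qv_lower (hX : IsMEVFrechet μ X) {s t : ℝ} (hs : 0 ≤ s) (ht : 0 ≤ t) :
    1 - ((I₁.card : ℝ) * s + (I₂.card : ℝ) * t) ≤ qv μ X I₁ I₂ s t := by
  have hsub : (pset X I₁ I₂ s t)ᶜ ⊆
      (⋃ i ∈ I₁, {ω | ¬ s * X i ω ≤ 1}) ∪ (⋃ j ∈ I₂, {ω | ¬ t * X j ω ≤ 1}) := by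
    intro ω hω
    simp only [pset, Set.mem_compl_iff, Set.mem_setOf_eq, not_and_or] at hω
    rcases hω with h | h
    · push_neg at h
      obtain ⟨i, hi, hlt⟩ := h
      exact Or.inl (Set.mem_biUnion hi (not_le.2 hlt))
    · push_neg at h
      obtain ⟨j, hj, hlt⟩ := h
      exact Or.inr (Set.mem_biUnion hj (not_le.2 hlt))
  have hμ : μ ((pset X I₁ I₂ s t)ᶜ) ≤
      ENNReal.ofReal ((I₁.card : ℝ) * s) + ENNReal.ofReal ((I₂.card : ℝ) * t) := by
    refine (measure_mono hsub).trans ((measure_union_le _ _).trans (add_le_add ?_ ?_))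
    · refine (measure_biUnion_finset_le _ _).trans ?_
      calc ∑ i ∈ I₁, μ {ω | ¬ s * X i ω ≤ 1} ≤ ∑ _i ∈ I₁, ENNReal.ofReal s :=
            Finset.sum_le_sum fun i _ => tail_bound μ hX i hs
        _ = I₁.card • ENNReal.ofReal s := by rw [Finset.sum_const]
        _ = ENNReal.ofReal ((I₁.card : ℝ) * s) := by
            rw [nsmul_eq_mul, ← ENNReal.ofReal_natCast, ← ENNReal.ofReal_mul (Nat.cast_nonneg _)]
    · refine (measure_biUnion_finset_le _ _).trans ?_
      calc ∑ j ∈ I₂, μ {ω | ¬ t * X j ω ≤ 1} ≤ ∑ _j ∈ I₂, ENNReal.ofReal t :=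
            Finset.sum_le_sum fun j _ => tail_bound μ hX j ht
        _ = I₂.card • ENNReal.ofReal t := by rw [Finset.sum_const]
        _ = ENNReal.ofReal ((I₂.card : ℝ) * t) := by
            rw [nsmul_eq_mul, ← ENNReal.ofReal_natCast, ← ENNReal.ofReal_mul (Nat.cast_nonneg _)]
  have hcompl : qv μ X I₁ I₂ s t = 1 - (μ ((pset X I₁ I₂ s t)ᶜ)).toReal := by
    have h := measure_add_measure_compl (μ := μ) (measurableSet_pset μ I₁ I₂ hX s t)
    have h2 := congrArg ENNReal.toReal h
    rw [ENNReal.toReal_add (measure_ne_top μ _) (measure_ne_top μ _)] at h2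
    simp only [measure_univ, ENNReal.toReal_one] at h2
    rw [qv]; linarith
  have h3 : (μ ((pset X I₁ I₂ s t)ᶜ)).toReal ≤ (I₁.card : ℝ) * s + (I₂.card : ℝ) * t := by
    have h4 := ENNReal.toReal_mono (ENNReal.add_ne_top.2 ⟨ENNReal.ofReal_ne_top, ENNReal.ofReal_ne_top⟩) hμ
    rw [ENNReal.toReal_add ENNReal.ofReal_ne_top ENNReal.ofReal_ne_top,
      ENNReal.toReal_ofReal (by positivity), ENNReal.toReal_ofReal (by positivity)] at h4
    exact h4
  rw [hcompl]; linarith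

lemma qv_gap (hX : IsMEVFrechet μ X) {s s' t : ℝ} (hs' : 0 ≤ s') (hss : s' ≤ s) :
    qv μ X I₁ I₂ s' t ≤ qv μ X I₁ I₂ s t + (I₁.card : ℝ) * (s - s') := by
  have hsub : pset X I₁ I₂ s' t ⊆ pset X I₁ I₂ s t ∪
      ⋃ i ∈ I₁, ({ω | s' * X i ω ≤ 1} ∩ {ω | ¬ s * X i ω ≤ 1}) := by
    rintro ω ⟨hA, hB⟩
    by_cases h : ∀ i ∈ I₁, s * X i ω ≤ 1
    · exact Or.inl ⟨h, hB⟩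
    · push_neg at h
      obtain ⟨i, hi, hlt⟩ := h
      exact Or.inr (Set.mem_biUnion hi ⟨hA i hi, not_le.2 hlt⟩)
  have hpiece : ∀ i ∈ I₁, μ ({ω | s' * X i ω ≤ 1} ∩ {ω | ¬ s * X i ω ≤ 1})
      ≤ ENNReal.ofReal (s - s') := by
    intro i _
    rcases eq_or_lt_of_le hs' with h0 | h0
    · refine (measure_mono Set.inter_subset_right).trans
        ((tail_bound μ hX i (hs'.trans hss)).trans (ENNReal.ofReal_le_ofReal (by linarith)))
    · have hspos : 0 < s := lt_of_lt_of_le h0 hss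
      have heq : {ω | s' * X i ω ≤ 1} ∩ {ω | ¬ s * X i ω ≤ 1}
          = {ω | X i ω ≤ s'⁻¹} \ {ω | X i ω ≤ s⁻¹} := by
        ext ω
        simp only [Set.mem_inter_iff, Set.mem_diff, Set.mem_setOf_eq,
          mul_le_one_iff_le_inv h0, mul_le_one_iff_le_inv hspos]
      have hsubset : {ω | X i ω ≤ s⁻¹} ⊆ {ω | X i ω ≤ s'⁻¹} := by
        intro ω hω
        exact le_trans (show X i ω ≤ s⁻¹ from hω) (by
          have := inv_anti₀ h0 hss
          exact this)
      rw [heq, measure_diff hsubset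
        (measurableSet_le (hX.meas i) measurable_const).nullMeasurableSet (measure_ne_top μ _),
        marg_measure μ hX i (inv_pos.2 h0), marg_measure μ hX i (inv_pos.2 hspos),
        inv_inv, inv_inv, ← ENNReal.ofReal_sub _ (Real.exp_pos _).le]
      exact ENNReal.ofReal_le_ofReal (exp_gap hs' hss)
  have hmain : μ (pset X I₁ I₂ s' t) ≤ μ (pset X I₁ I₂ s t)
      + ENNReal.ofReal ((I₁.card : ℝ) * (s - s')) := by
    refine (measure_mono hsub).trans ((measure_union_le _ _).trans (add_le_add le_rfl ?_))
    refine (measure_biUnion_finset_le _ _).trans ?_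
    calc ∑ i ∈ I₁, μ ({ω | s' * X i ω ≤ 1} ∩ {ω | ¬ s * X i ω ≤ 1})
        ≤ ∑ _i ∈ I₁, ENNReal.ofReal (s - s') := Finset.sum_le_sum hpiece
      _ = I₁.card • ENNReal.ofReal (s - s') := by rw [Finset.sum_const]
      _ = ENNReal.ofReal ((I₁.card : ℝ) * (s - s')) := by
          rw [nsmul_eq_mul, ← ENNReal.ofReal_natCast, ← ENNReal.ofReal_mul (Nat.cast_nonneg _)]
  have h5 := ENNReal.toReal_mono
    (ENNReal.add_ne_top.2 ⟨measure_ne_top μ _, ENNReal.ofReal_ne_top⟩) hmain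
  rw [ENNReal.toReal_add (measure_ne_top μ _) ENNReal.ofReal_ne_top,
    ENNReal.toReal_ofReal (mul_nonneg (Nat.cast_nonneg _) (sub_nonneg.2 hss))] at h5
  exact h5

lemma tendsto_jointCDF (J : Finset (Fin d)) (y : Fin d → ℝ) (c : ℝ) (hc : 0 < c) :
    Tendsto (fun n : ℕ => jointCDF μ X (fun i => if i ∈ J then y i else c * ((n : ℝ) + 1)))
      atTop (nhds ((μ {ω | ∀ i ∈ J, X i ω ≤ y i}).toReal)) := by
  set S : ℕ → Set Ω := fun n => {ω | ∀ i, X i ω ≤ (if i ∈ J then y i else c * ((n : ℝ) + 1))}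
    with hS
  have hmono : Monotone S := by
    intro n m hnm ω hω i
    have h := hω i
    by_cases hi : i ∈ J
    · simpa [hi] using h
    · simp only [hi, if_false] at h ⊢
      refine h.trans (mul_le_mul_of_nonneg_left ?_ hc.le)
      have : (n : ℝ) ≤ (m : ℝ) := Nat.cast_le.2 hnm
      linarith
  have hU : ⋃ n, S n = {ω | ∀ i ∈ J, X i ω ≤ y i} := by
    ext ω
    constructor
    · rintro ⟨_, ⟨n, rfl⟩, hω⟩ i hi
      have := hω i
      simpa [hi] using this
    · intro hω
      have hev : ∀ᶠ n : ℕ in atTop, ∀ i, X i ω ≤ c * ((n : ℝ) + 1) := by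
        refine Filter.eventually_all.2 fun i => ?_
        have htend : Tendsto (fun n : ℕ => c * ((n : ℝ) + 1)) atTop atTop := by
          apply Tendsto.const_mul_atTop hc
          exact tendsto_atTop_add_const_right atTop 1 tendsto_natCast_atTop_atTop
        exact htend.eventually_ge_atTop (X i ω)
      obtain ⟨n, hn⟩ := hev.exists
      refine Set.mem_iUnion.2 ⟨n, fun i => ?_⟩
      by_cases hi : i ∈ J
      · simpa [hi] using hω i hi
      · simpa [hi] using hn i
  have h1 : Tendsto (fun n => μ (S n)) atTop (nhds (μ {ω | ∀ i ∈ J, X i ω ≤ y i})) := by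
    have := tendsto_measure_iUnion_atTop (μ := μ) hmono
    rwa [hU] at this
  exact (ENNReal.tendsto_toReal (measure_ne_top μ _)).comp h1

lemma pset_eq_setJ (hdisj : Disjoint I₁ I₂) {s t : ℝ} (hs : 0 ≤ s) (ht : 0 ≤ t) :
    {ω : Ω | ∀ i ∈ ((if s = 0 then ∅ else I₁) ∪ (if t = 0 then ∅ else I₂)),
      X i ω ≤ (if i ∈ I₁ then s⁻¹ else t⁻¹)} = pset X I₁ I₂ s t := by
  ext ω
  simp only [Set.mem_setOf_eq, pset]
  constructor
  · intro h
    constructor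
    · intro i hi
      by_cases hs0 : s = 0
      · simp [hs0]
      · have hsp : 0 < s := lt_of_le_of_ne hs (Ne.symm hs0)
        have hiJ : i ∈ ((if s = 0 then ∅ else I₁) ∪ (if t = 0 then ∅ else I₂)) := by
          rw [Finset.mem_union]; left; simp [hs0, hi]
        have := h i hiJ
        rw [if_pos hi] at this
        exact (mul_le_one_iff_le_inv hsp).2 this
    · intro j hj
      by_cases ht0 : t = 0
      · simp [ht0]
      · have htp : 0 < t := lt_of_le_of_ne ht (Ne.symm ht0)
        have hjJ : j ∈ ((if s = 0 then ∅ else I₁) ∪ (if t = 0 then ∅ else I₂)) := by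
          rw [Finset.mem_union]; right; simp [ht0, hj]
        have := h j hjJ
        rw [if_neg (Finset.disjoint_right.1 hdisj hj)] at this
        exact (mul_le_one_iff_le_inv htp).2 this
  · rintro ⟨hA, hB⟩ i hi
    rw [Finset.mem_union] at hi
    rcases hi with hi | hi
    · by_cases hs0 : s = 0
      · simp [hs0] at hi
      · rw [if_neg hs0] at hi
        have hsp : 0 < s := lt_of_le_of_ne hs (Ne.symm hs0)
        rw [if_pos hi]
        exact (mul_le_one_iff_le_inv hsp).1 (hA i hi)
    · by_cases ht0 : t = 0
      · simp [ht0] at hi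
      · rw [if_neg ht0] at hi
        have htp : 0 < t := lt_of_le_of_ne ht (Ne.symm ht0)
        rw [if_neg (Finset.disjoint_right.1 hdisj hi)]
        exact (mul_le_one_iff_le_inv htp).1 (hB i hi)

lemma qv_homog (hX : IsMEVFrechet μ X) (hdisj : Disjoint I₁ I₂) {s t c : ℝ}
    (hs : 0 ≤ s) (ht : 0 ≤ t) (hc : 0 < c) :
    qv μ X I₁ I₂ (s / c) (t / c) ^ c = qv μ X I₁ I₂ s t := by
  classical
  set J : Finset (Fin d) := (if s = 0 then ∅ else I₁) ∪ (if t = 0 then ∅ else I₂) with hJ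
  set y : Fin d → ℝ := fun i => if i ∈ I₁ then s⁻¹ else t⁻¹ with hy
  have hsc : 0 ≤ s / c := div_nonneg hs hc.le
  have htc : 0 ≤ t / c := div_nonneg ht hc.le
  have hJ' : ((if s / c = 0 then ∅ else I₁) ∪ (if t / c = 0 then ∅ else I₂)) = J := by
    simp only [hJ, div_eq_zero_iff, hc.ne', or_false]
  have hy' : (fun i => if i ∈ I₁ then (s / c)⁻¹ else (t / c)⁻¹) = fun i => c * y i := by
    funext i
    simp only [hy]
    split_ifs with hi
    · rw [inv_div]; ring
    · rw [inv_div]; ring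
  have hypos : ∀ i ∈ J, 0 < y i := by
    intro i hi
    rw [hJ, Finset.mem_union] at hi
    rcases hi with hi | hi
    · by_cases hs0 : s = 0
      · simp [hs0] at hi
      · rw [if_neg hs0] at hi
        have hyi : y i = s⁻¹ := by simp [hy, hi]
        rw [hyi]
        exact inv_pos.2 (lt_of_le_of_ne hs (Ne.symm hs0))
    · by_cases ht0 : t = 0
      · simp [ht0] at hi
      · rw [if_neg ht0] at hi
        have hyi : y i = t⁻¹ := by simp [hy, Finset.disjoint_right.1 hdisj hi]
        rw [hyi]
        exact inv_pos.2 (lt_of_le_of_ne ht (Ne.symm ht0))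
  have hA : Tendsto (fun n : ℕ => jointCDF μ X (fun i => if i ∈ J then y i else 1 * ((n : ℝ) + 1)))
      atTop (nhds (qv μ X I₁ I₂ s t)) := by
    have := tendsto_jointCDF (μ := μ) (X := X) J y 1 one_pos
    rwa [show {ω : Ω | ∀ i ∈ J, X i ω ≤ y i} = pset X I₁ I₂ s t from
      pset_eq_setJ I₁ I₂ hdisj hs ht] at this
  have hB : Tendsto (fun n : ℕ =>
        jointCDF μ X (fun i => if i ∈ J then c * y i else c * ((n : ℝ) + 1)))
      atTop (nhds (qv μ X I₁ I₂ (s / c) (t / c))) := by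
    have := tendsto_jointCDF (μ := μ) (X := X) J (fun i => c * y i) c hc
    rwa [show {ω : Ω | ∀ i ∈ J, X i ω ≤ c * y i} = pset X I₁ I₂ (s / c) (t / c) by
      rw [← pset_eq_setJ I₁ I₂ hdisj hsc htc, hJ']
      congr 1
      ext ω
      refine forall₂_congr fun i hi => ?_
      rw [congrFun hy' i]] at this
  have hBA : ∀ n : ℕ, jointCDF μ X (fun i => if i ∈ J then c * y i else c * ((n : ℝ) + 1)) ^ c
      = jointCDF μ X (fun i => if i ∈ J then y i else 1 * ((n : ℝ) + 1)) := by
    intro n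
    have hpos : ∀ i, 0 < (if i ∈ J then y i else 1 * ((n : ℝ) + 1)) := by
      intro i
      split_ifs with hi
      · exact hypos i hi
      · positivity
    have h0 := hX.maxStable c hc (fun i => if i ∈ J then y i else 1 * ((n : ℝ) + 1)) hpos
    beta_reduce at h0
    have h2 : (fun i => c * (if i ∈ J then y i else 1 * ((n : ℝ) + 1)))
        = (fun i => if i ∈ J then c * y i else c * ((n : ℝ) + 1)) := by
      funext i; split_ifs <;> ring
    rw [h2] at h0
    exact h0
  have hB' : Tendsto (fun n : ℕ =>
        jointCDF μ X (fun i => if i ∈ J then c * y i else c * ((n : ℝ) + 1)) ^ c)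
      atTop (nhds (qv μ X I₁ I₂ (s / c) (t / c) ^ c)) :=
    ((Real.continuousAt_rpow_const _ c (Or.inr hc.le)).tendsto).comp hB
  have hB'' : Tendsto (fun n : ℕ =>
        jointCDF μ X (fun i => if i ∈ J then y i else 1 * ((n : ℝ) + 1)))
      atTop (nhds (qv μ X I₁ I₂ (s / c) (t / c) ^ c)) := by
    refine hB'.congr fun n => hBA n
  exact tendsto_nhds_unique hB'' hA

lemma qv_pos (hX : IsMEVFrechet μ X) (hdisj : Disjoint I₁ I₂) {s t : ℝ}
    (hs : 0 ≤ s) (ht : 0 ≤ t) : 0 < qv μ X I₁ I₂ s t := by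
  set D : ℝ := (I₁.card : ℝ) * s + (I₂.card : ℝ) * t with hD
  have hD0 : 0 ≤ D := by positivity
  set c : ℝ := 2 * D + 1 with hc
  have hcpos : 0 < c := by simp only [hc]; linarith
  have hbase : 0 < qv μ X I₁ I₂ (s / c) (t / c) := by
    have hl := qv_lower μ I₁ I₂ hX (div_nonneg hs hcpos.le) (div_nonneg ht hcpos.le)
    have harith : (I₁.card : ℝ) * (s / c) + (I₂.card : ℝ) * (t / c) = D / c := by
      field_simp; exact hD.symm
    rw [harith] at hl
    have hlt : D / c < 1 := (div_lt_one hcpos).2 (by simp only [hc]; linarith)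
    linarith
  rw [← qv_homog μ I₁ I₂ hX hdisj hs ht hcpos]
  exact Real.rpow_pos_of_pos hbase c

lemma neglog_lip (hX : IsMEVFrechet μ X) (hdisj : Disjoint I₁ I₂) {s s' t : ℝ}
    (hs' : 0 ≤ s') (hss : s' ≤ s) (ht : 0 ≤ t) :
    -Real.log (qv μ X I₁ I₂ s t) + Real.log (qv μ X I₁ I₂ s' t)
      ≤ (I₁.card : ℝ) * (s - s') := by
  have hs : 0 ≤ s := hs'.trans hss
  have key := core_scaling (A := qv μ X I₁ I₂ s t) (A' := qv μ X I₁ I₂ s' t)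
    (K := (I₁.card : ℝ) * (s - s')) (D := (I₁.card : ℝ) * s + (I₂.card : ℝ) * t)
    (mul_nonneg (Nat.cast_nonneg _) (sub_nonneg.2 hss)) (by positivity)
    (fun c => qv μ X I₁ I₂ (s / c) (t / c)) (fun c => qv μ X I₁ I₂ (s' / c) (t / c))
    (fun c hc => qv_pos μ I₁ I₂ hX hdisj (div_nonneg hs (by linarith)) (div_nonneg ht (by linarith)))
    (fun c hc => by
      have hcp : (0:ℝ) < c := by linarith
      exact qv_anti1 μ I₁ I₂ (div_nonneg hs' hcp.le) (by gcongr))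
    (fun c hc => by
      have hcp : (0:ℝ) < c := by linarith
      show qv μ X I₁ I₂ (s' / c) (t / c) - qv μ X I₁ I₂ (s / c) (t / c)
        ≤ (I₁.card : ℝ) * (s - s') / c
      have hg := qv_gap (t := t / c) μ I₁ I₂ hX (div_nonneg hs' hcp.le)
        (show s' / c ≤ s / c by gcongr)
      have harith : (I₁.card : ℝ) * (s / c - s' / c) = (I₁.card : ℝ) * (s - s') / c := by
        field_simp
      linarith [harith ▸ hg])
    (fun c hc => by
      have hcp : (0:ℝ) < c := by linarith
      show 1 - ((I₁.card : ℝ) * s + (I₂.card : ℝ) * t) / c ≤ qv μ X I₁ I₂ (s / c) (t / c)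
      have hl := qv_lower μ I₁ I₂ hX (div_nonneg hs hcp.le) (div_nonneg ht hcp.le)
      have harith : (I₁.card : ℝ) * (s / c) + (I₂.card : ℝ) * (t / c)
          = ((I₁.card : ℝ) * s + (I₂.card : ℝ) * t) / c := by field_simp
      linarith [harith ▸ hl])
    (fun c hc => qv_homog μ I₁ I₂ hX hdisj hs ht (by linarith))
    (fun c hc => qv_homog μ I₁ I₂ hX hdisj hs' ht (by linarith))
  linarith

lemma log_qv_mono (hX : IsMEVFrechet μ X) (hdisj : Disjoint I₁ I₂) {s s' t : ℝ}
    (hs' : 0 ≤ s') (hss : s' ≤ s) (ht : 0 ≤ t) :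
    Real.log (qv μ X I₁ I₂ s t) ≤ Real.log (qv μ X I₁ I₂ s' t) :=
  Real.log_le_log (qv_pos μ I₁ I₂ hX hdisj (hs'.trans hss) ht) (qv_anti1 μ I₁ I₂ hs' hss)

lemma extCoef_eq2 : extCoef μ X I₂ = -Real.log (qv μ X I₁ I₂ 0 1) := by
  have hset : {ω : Ω | (∀ i ∈ I₂, X i ω ≤ (1:ℝ)) ∧ (∀ j ∈ (∅ : Finset (Fin d)), X j ω ≤ (1:ℝ))}
      = pset X I₁ I₂ 0 1 := by
    ext ω; simp [pset]
  rw [extCoef, mevL, hset, qv]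

lemma extCoef_eq1 : extCoef μ X I₁ = -Real.log (qv μ X I₁ I₂ 1 0) := by
  have hset : {ω : Ω | (∀ i ∈ I₁, X i ω ≤ (1:ℝ)) ∧ (∀ j ∈ (∅ : Finset (Fin d)), X j ω ≤ (1:ℝ))}
      = pset X I₁ I₂ 1 0 := by
    ext ω; simp [pset]
  rw [extCoef, mevL, hset, qv]

lemma neglog_qv_zero (hX : IsMEVFrechet μ X) (hdisj : Disjoint I₁ I₂) {t : ℝ} (htpos : 0 < t) :
    -Real.log (qv μ X I₁ I₂ 0 t) = t * extCoef μ X I₂ := by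
  rw [extCoef_eq2 μ I₁ I₂]
  have h := qv_homog μ I₁ I₂ hX hdisj le_rfl htpos.le htpos
  rw [zero_div, div_self htpos.ne'] at h
  rw [← h, Real.log_rpow (qv_pos μ I₁ I₂ hX hdisj le_rfl zero_le_one)]
  ring

lemma neglog_qv_zero' (hX : IsMEVFrechet μ X) (hdisj : Disjoint I₁ I₂) {s : ℝ} (hspos : 0 < s) :
    -Real.log (qv μ X I₁ I₂ s 0) = s * extCoef μ X I₁ := by
  rw [extCoef_eq1 μ I₁ I₂]
  have h := qv_homog μ I₁ I₂ hX hdisj hspos.le le_rfl hspos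
  rw [zero_div, div_self hspos.ne'] at h
  rw [← h, Real.log_rpow (qv_pos μ I₁ I₂ hX hdisj zero_le_one le_rfl)]
  ring

lemma extCoef_bounds1 (hX : IsMEVFrechet μ X) (hdisj : Disjoint I₁ I₂) :
    0 ≤ extCoef μ X I₁ ∧ extCoef μ X I₁ ≤ (I₁.card : ℝ) := by
  have h1 := extCoef_eq1 μ I₁ I₂ (X := X)
  constructor
  · rw [h1]
    have := Real.log_nonpos (qv_nonneg (X := X) μ I₁ I₂ 1 0) (qv_le_one (X := X) μ I₁ I₂ 1 0)
    linarith
  · have := neglog_lip μ I₁ I₂ hX hdisj (le_refl (0:ℝ)) zero_le_one le_rfl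
    rw [qv_zero_zero, Real.log_one] at this
    rw [h1]; linarith

end Aux

noncomputable def lam {Ω : Type*} [MeasurableSpace Ω] (μ : Measure Ω) {d : ℕ}
    (X : Fin d → Ω → ℝ) (I₁ I₂ : Finset (Fin d)) (s t : ℝ) : ℝ :=
  if s = 0 ∨ t = 0 then 0
  else s * extCoef μ X I₁ + t * extCoef μ X I₂ + Real.log (qv μ X I₁ I₂ s t)

section Lam

variable {Ω : Type*} [MeasurableSpace Ω] (μ : Measure Ω) [IsProbabilityMeasure μ]
  {d : ℕ} {X : Fin d → Ω → ℝ} (I₁ I₂ : Finset (Fin d))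

lemma lam_swap (s t : ℝ) : lam μ X I₁ I₂ s t = lam μ X I₂ I₁ t s := by
  unfold lam
  by_cases h : s = 0 ∨ t = 0
  · rw [if_pos h, if_pos (Or.symm h)]
  · rw [if_neg h, if_neg (fun hc => h (Or.symm hc)), qv_swap μ I₁ I₂]
    ring

lemma lam_lip1 (hX : IsMEVFrechet μ X) (hdisj : Disjoint I₁ I₂) {s s' t : ℝ}
    (hs' : 0 ≤ s') (hss : s' ≤ s) (ht : 0 ≤ t) :
    |lam μ X I₁ I₂ s t - lam μ X I₁ I₂ s' t| ≤ (I₁.card : ℝ) * (s - s') := by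
  have hs : 0 ≤ s := hs'.trans hss
  obtain ⟨he0, hec⟩ := extCoef_bounds1 μ I₁ I₂ hX hdisj
  by_cases ht0 : t = 0
  · unfold lam
    rw [if_pos (Or.inr ht0), if_pos (Or.inr ht0), sub_zero, abs_zero]
    exact mul_nonneg (Nat.cast_nonneg _) (sub_nonneg.2 hss)
  have htpos : 0 < t := lt_of_le_of_ne ht (Ne.symm ht0)
  by_cases hs0 : s = 0
  · have hs'0 : s' = 0 := le_antisymm (hs0 ▸ hss) hs'
    simp [hs0, hs'0]
  have hspos : 0 < s := lt_of_le_of_ne hs (Ne.symm hs0)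
  by_cases hs'0 : s' = 0
  · subst hs'0
    unfold lam
    rw [if_pos (Or.inl rfl), if_neg (by push_neg; exact ⟨hs0, ht0⟩)]
    have h0 : t * extCoef μ X I₂ = -Real.log (qv μ X I₁ I₂ 0 t) :=
      (neglog_qv_zero μ I₁ I₂ hX hdisj htpos).symm
    have hup := neglog_lip μ I₁ I₂ hX hdisj (le_refl (0:ℝ)) hs ht
    have hmono := log_qv_mono μ I₁ I₂ hX hdisj (le_refl (0:ℝ)) hs ht
    have h2 : 0 ≤ s * ((I₁.card : ℝ) - extCoef μ X I₁) := mul_nonneg hs (sub_nonneg.2 hec)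
    have h3 : 0 ≤ s * extCoef μ X I₁ := mul_nonneg hs he0
    rw [h0, abs_le]
    constructor <;> nlinarith
  · have hs'pos : 0 < s' := lt_of_le_of_ne hs' (Ne.symm hs'0)
    unfold lam
    rw [if_neg (by push_neg; exact ⟨hs0, ht0⟩), if_neg (by push_neg; exact ⟨hs'0, ht0⟩)]
    have hup := neglog_lip μ I₁ I₂ hX hdisj hs' hss ht
    have hmono := log_qv_mono μ I₁ I₂ hX hdisj hs' hss ht
    have h2 : 0 ≤ (s - s') * ((I₁.card : ℝ) - extCoef μ X I₁) :=
      mul_nonneg (sub_nonneg.2 hss) (sub_nonneg.2 hec)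
    have h3 : 0 ≤ (s - s') * extCoef μ X I₁ := mul_nonneg (sub_nonneg.2 hss) he0
    rw [abs_le]
    constructor <;> nlinarith

lemma lam_lip1_abs (hX : IsMEVFrechet μ X) (hdisj : Disjoint I₁ I₂) {s s' t : ℝ}
    (hs : 0 ≤ s) (hs' : 0 ≤ s') (ht : 0 ≤ t) :
    |lam μ X I₁ I₂ s t - lam μ X I₁ I₂ s' t| ≤ (I₁.card : ℝ) * |s - s'| := by
  rcases le_total s' s with h | h
  · rw [abs_of_nonneg (sub_nonneg.2 h)]
    exact lam_lip1 μ I₁ I₂ hX hdisj hs' h ht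
  · rw [abs_sub_comm, abs_sub_comm s s']
    rw [abs_of_nonneg (sub_nonneg.2 h)]
    exact lam_lip1 μ I₁ I₂ hX hdisj hs h ht

lemma lam_lip2_abs (hX : IsMEVFrechet μ X) (hdisj : Disjoint I₁ I₂) {s t t' : ℝ}
    (hs : 0 ≤ s) (ht : 0 ≤ t) (ht' : 0 ≤ t') :
    |lam μ X I₁ I₂ s t - lam μ X I₁ I₂ s t'| ≤ (I₂.card : ℝ) * |t - t'| := by
  rw [lam_swap μ I₁ I₂ s t, lam_swap μ I₁ I₂ s t']
  exact lam_lip1_abs μ I₂ I₁ hX hdisj.symm ht ht' hs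

lemma lam_lip (hX : IsMEVFrechet μ X) (hdisj : Disjoint I₁ I₂) {s s' t t' : ℝ}
    (hs : 0 ≤ s) (hs' : 0 ≤ s') (ht : 0 ≤ t) (ht' : 0 ≤ t') :
    |lam μ X I₁ I₂ s t - lam μ X I₁ I₂ s' t'|
      ≤ (I₁.card : ℝ) * |s - s'| + (I₂.card : ℝ) * |t - t'| := by
  have h1 := lam_lip1_abs μ I₁ I₂ hX hdisj hs hs' ht
  have h2 := lam_lip2_abs μ I₁ I₂ hX hdisj hs' ht ht'
  calc |lam μ X I₁ I₂ s t - lam μ X I₁ I₂ s' t'|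
      ≤ |lam μ X I₁ I₂ s t - lam μ X I₁ I₂ s' t|
        + |lam μ X I₁ I₂ s' t - lam μ X I₁ I₂ s' t'| := abs_sub_le _ _ _
    _ ≤ (I₁.card : ℝ) * |s - s'| + (I₂.card : ℝ) * |t - t'| := add_le_add h1 h2

lemma mevL_eq_qv {s t : ℝ} (hs : 0 < s) (ht : 0 < t) :
    mevL μ X I₁ I₂ s⁻¹ t⁻¹ = -Real.log (qv μ X I₁ I₂ s t) := by
  rw [mevL, qv]
  have hset : {ω : Ω | (∀ i ∈ I₁, X i ω ≤ s⁻¹) ∧ (∀ j ∈ I₂, X j ω ≤ t⁻¹)}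
      = pset X I₁ I₂ s t := by
    ext ω
    simp only [Set.mem_setOf_eq, pset]
    exact and_congr (forall₂_congr fun i _ => (mul_le_one_iff_le_inv hs).symm)
      (forall₂_congr fun j _ => (mul_le_one_iff_le_inv ht).symm)
  rw [hset]

end Lam

lemma enn_abs_eq {x x' : ℝ≥0∞} (hx : x ≠ ⊤) (hx' : x' ≠ ⊤) :
    (x - x') + (x' - x) = ENNReal.ofReal |x.toReal - x'.toReal| := by
  rcases le_total x x' with h | h
  · rw [tsub_eq_zero_of_le h, zero_add]
    calc x' - x = ENNReal.ofReal ((x' - x).toReal) :=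
          (ENNReal.ofReal_toReal (ENNReal.sub_ne_top hx')).symm
      _ = ENNReal.ofReal (x'.toReal - x.toReal) := by
          rw [ENNReal.toReal_sub_of_le h hx']
      _ = ENNReal.ofReal |x.toReal - x'.toReal| := by
          rw [abs_sub_comm, abs_of_nonneg (sub_nonneg.2 (ENNReal.toReal_mono hx' h))]
  · rw [tsub_eq_zero_of_le h, add_zero]
    calc x - x' = ENNReal.ofReal ((x - x').toReal) :=
          (ENNReal.ofReal_toReal (ENNReal.sub_ne_top hx)).symm
      _ = ENNReal.ofReal (x.toReal - x'.toReal) := by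
          rw [ENNReal.toReal_sub_of_le h hx]
      _ = ENNReal.ofReal |x.toReal - x'.toReal| := by
          rw [abs_of_nonneg (sub_nonneg.2 (ENNReal.toReal_mono hx h))]



section Link

variable {Ω : Type*} [MeasurableSpace Ω] (μ : Measure Ω) [IsProbabilityMeasure μ]
  {d : ℕ} {X : Fin d → Ω → ℝ} (I₁ I₂ : Finset (Fin d))

lemma lambdaUExt_eq {x y : ℝ≥0∞} (hx : x ≠ ⊤) (hy : y ≠ ⊤) :
    lambdaUExt μ X I₁ I₂ x y = lam μ X I₁ I₂ x.toReal y.toReal := by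
  unfold lambdaUExt lam
  by_cases h : x = 0 ∨ y = 0
  · have h' : x.toReal = 0 ∨ y.toReal = 0 :=
      h.imp (fun e => by rw [e]; simp) (fun e => by rw [e]; simp)
    rw [if_pos h, if_pos h']
  · push_neg at h
    have hxp : 0 < x.toReal := ENNReal.toReal_pos h.1 hx
    have hyp : 0 < y.toReal := ENNReal.toReal_pos h.2 hy
    rw [if_neg (by push_neg; exact h), if_neg hx, if_neg hy,
      if_neg (by push_neg; exact ⟨hxp.ne', hyp.ne'⟩),
      mevL_eq_qv μ I₁ I₂ hxp hyp]
    ring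

lemma lambdaUExt_top_left {y : ℝ≥0∞} :
    lambdaUExt μ X I₁ I₂ ⊤ y = y.toReal * extCoef μ X I₂ := by
  unfold lambdaUExt
  by_cases hy : y = 0
  · rw [if_pos (Or.inr hy), hy]; simp
  · rw [if_neg (by push_neg; exact ⟨by simp, hy⟩), if_pos rfl]

lemma lambdaUExt_top_right {x : ℝ≥0∞} (hx : x ≠ ⊤) :
    lambdaUExt μ X I₁ I₂ x ⊤ = x.toReal * extCoef μ X I₁ := by
  unfold lambdaUExt
  by_cases hx0 : x = 0
  · rw [if_pos (Or.inl hx0), hx0]; simp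
  · rw [if_neg (by push_neg; exact ⟨hx0, by simp⟩), if_neg hx, if_pos rfl]

end Link


open ENNReal in
/-- Lipschitz-type bound: for all `(x,y), (x*,y*) ∈ [0,∞]² \ {(∞,∞)}`,
`|Λ_U^{(I₁,I₂)}(x,y) - Λ_U^{(I₁,I₂)}(x*,y*)| ≤ |I₁|·|x - x*| + |I₂|·|y - y*|`
(absolute differences of extended reals taken as `(a - b) + (b - a)` in `[0,∞]`). -/
theorem statement6 {Ω : Type*} [MeasurableSpace Ω] (μ : Measure Ω) [IsProbabilityMeasure μ]
    {d : ℕ} (X : Fin d → Ω → ℝ) (hX : IsMEVFrechet μ X)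
    (I₁ I₂ : Finset (Fin d)) (h1 : I₁.Nonempty) (h2 : I₂.Nonempty) (hdisj : Disjoint I₁ I₂)
    (x y x' y' : ℝ≥0∞) (hxy : ¬(x = ∞ ∧ y = ∞)) (hxy' : ¬(x' = ∞ ∧ y' = ∞)) :
    ENNReal.ofReal |lambdaUExt μ X I₁ I₂ x y - lambdaUExt μ X I₁ I₂ x' y'|
      ≤ (I₁.card : ℝ≥0∞) * ((x - x') + (x' - x))
        + (I₂.card : ℝ≥0∞) * ((y - y') + (y' - y)) := by
  have hc1 : (I₁.card : ℝ≥0∞) ≠ 0 := Nat.cast_ne_zero.2 h1.card_pos.ne'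
  have hc2 : (I₂.card : ℝ≥0∞) ≠ 0 := Nat.cast_ne_zero.2 h2.card_pos.ne'
  obtain ⟨he10, he1c⟩ := extCoef_bounds1 μ I₁ I₂ hX hdisj
  obtain ⟨he20, he2c⟩ := extCoef_bounds1 μ I₂ I₁ hX hdisj.symm
  -- mismatched infinities give an infinite right-hand side
  by_cases hx : x = ⊤ <;> by_cases hx' : x' = ⊤
  · -- x = x' = ⊤
    have hy : y ≠ ⊤ := fun h => hxy ⟨hx, h⟩
    have hy' : y' ≠ ⊤ := fun h => hxy' ⟨hx', h⟩
    rw [hx, hx', lambdaUExt_top_left μ I₁ I₂, lambdaUExt_top_left μ I₁ I₂]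
    have habs : |y.toReal * extCoef μ X I₂ - y'.toReal * extCoef μ X I₂|
        ≤ (I₂.card : ℝ) * |y.toReal - y'.toReal| := by
      rw [← sub_mul, abs_mul, abs_of_nonneg he20, mul_comm]
      exact mul_le_mul_of_nonneg_right he2c (abs_nonneg _)
    refine le_trans (ENNReal.ofReal_le_ofReal habs) ?_
    rw [ENNReal.ofReal_mul (Nat.cast_nonneg _), ENNReal.ofReal_natCast, ← enn_abs_eq hy hy']
    exact le_add_self
  · -- x = ⊤, x' ≠ ⊤ : RHS infinite
    have hsub : x - x' = ⊤ := ENNReal.sub_eq_top_iff.2 ⟨hx, hx'⟩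
    have hR : (I₁.card : ℝ≥0∞) * ((x - x') + (x' - x)) + (I₂.card : ℝ≥0∞) * ((y - y') + (y' - y)) = ⊤ := by
      simp [hsub, hc1]
    exact le_top.trans_eq hR.symm
  · have hsub : x' - x = ⊤ := ENNReal.sub_eq_top_iff.2 ⟨hx', hx⟩
    have hR : (I₁.card : ℝ≥0∞) * ((x - x') + (x' - x)) + (I₂.card : ℝ≥0∞) * ((y - y') + (y' - y)) = ⊤ := by
      simp [hsub, hc1]
    exact le_top.trans_eq hR.symm
  · -- x, x' finite
    by_cases hy : y = ⊤ <;> by_cases hy' : y' = ⊤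
    · -- y = y' = ⊤
      rw [hy, hy', lambdaUExt_top_right μ I₁ I₂ hx, lambdaUExt_top_right μ I₁ I₂ hx']
      have habs : |x.toReal * extCoef μ X I₁ - x'.toReal * extCoef μ X I₁|
          ≤ (I₁.card : ℝ) * |x.toReal - x'.toReal| := by
        rw [← sub_mul, abs_mul, abs_of_nonneg he10, mul_comm]
        exact mul_le_mul_of_nonneg_right he1c (abs_nonneg _)
      refine le_trans (ENNReal.ofReal_le_ofReal habs) ?_
      rw [ENNReal.ofReal_mul (Nat.cast_nonneg _), ENNReal.ofReal_natCast, ← enn_abs_eq hx hx']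
      exact self_le_add_right _ _
    · have hsub : y - y' = ⊤ := ENNReal.sub_eq_top_iff.2 ⟨hy, hy'⟩
      have hR : (I₁.card : ℝ≥0∞) * ((x - x') + (x' - x)) + (I₂.card : ℝ≥0∞) * ((y - y') + (y' - y)) = ⊤ := by
        simp [hsub, hc2]
      exact le_top.trans_eq hR.symm
    · have hsub : y' - y = ⊤ := ENNReal.sub_eq_top_iff.2 ⟨hy', hy⟩
      have hR : (I₁.card : ℝ≥0∞) * ((x - x') + (x' - x)) + (I₂.card : ℝ≥0∞) * ((y - y') + (y' - y)) = ⊤ := by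
        simp [hsub, hc2]
      exact le_top.trans_eq hR.symm
    · -- all finite
      rw [lambdaUExt_eq μ I₁ I₂ hx hy, lambdaUExt_eq μ I₁ I₂ hx' hy']
      refine le_trans (ENNReal.ofReal_le_ofReal
        (lam_lip μ I₁ I₂ hX hdisj ENNReal.toReal_nonneg ENNReal.toReal_nonneg
          ENNReal.toReal_nonneg ENNReal.toReal_nonneg)) ?_
      rw [ENNReal.ofReal_add (by positivity) (by positivity),
        ENNReal.ofReal_mul (Nat.cast_nonneg _), ENNReal.ofReal_mul (Nat.cast_nonneg _),
        ENNReal.ofReal_natCast, ENNReal.ofReal_natCast,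
        ← enn_abs_eq hx hx', ← enn_abs_eq hy hy']
end
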